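/- arXiv:1811.12138 — 10 statements merged into one kernel-verified Lean document; each statement's English description precedes it below -/
import Mathlib

section
/- Let G be a simple graph on n vertices and let λ₁ be the largest eigenvalue of its adjacency matrix. Then EE(G) ≥ e^{λ₁} + (n − 1) − λ₁, where EE(G) is the Estrada index of G. -/
/-- The adjacency matrix of a simple graph over `ℝ` is Hermitian. -/
theorem adjHerm {n : ℕ} (G : SimpleGraph (Fin n)) [DecidableRel G.Adj] :
    (G.adjMatrix ℝ).IsHermitian := by
  rw [Matrix.IsHermitian, Matrix.conjTranspose_eq_transpose_of_trivial]
  exact G.isSymm_adjMatrix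

/-- The (real) eigenvalues of the adjacency matrix of `G`. -/
noncomputable def graphEigs {n : ℕ} (G : SimpleGraph (Fin n)) [DecidableRel G.Adj] :
    Fin n → ℝ := (adjHerm G).eigenvalues

/-- The Estrada index `EE(G) = ∑ i, exp (λ i)`. -/
noncomputable def estradaIndex {n : ℕ} (G : SimpleGraph (Fin n)) [DecidableRel G.Adj] : ℝ :=
  ∑ i, Real.exp (graphEigs G i)

lemma sum_eigs_eq_trace {m : ℕ} (A : Matrix (Fin m) (Fin m) ℝ) (hA : A.IsHermitian) :
    ∑ i, hA.eigenvalues i = A.trace := by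
  conv_rhs => rw [hA.spectral_theorem]
  rw [Unitary.conjStarAlgAut_apply, Matrix.trace_mul_comm, ← Matrix.mul_assoc,
    (Matrix.mem_unitaryGroup_iff').mp (hA.eigenvectorUnitary).2, one_mul,
    Matrix.trace_diagonal]
  simp

lemma sum_graphEigs {n : ℕ} (G : SimpleGraph (Fin n)) [DecidableRel G.Adj] :
    ∑ i, graphEigs G i = 0 := by
  rw [graphEigs, sum_eigs_eq_trace _ (adjHerm G), SimpleGraph.trace_adjMatrix]

/-- For a simple graph `G` on `n` vertices with largest adjacency
eigenvalue `λ₁`, one has `EE(G) ≥ e^{λ₁} + (n − 1) − λ₁`. -/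
theorem estrada_ge_exp_lam_one {n : ℕ} (G : SimpleGraph (Fin n)) [DecidableRel G.Adj]
    (lam1 : ℝ) (hlam : IsGreatest (Set.range (graphEigs G)) lam1) :
    estradaIndex G ≥ Real.exp lam1 + ((n : ℝ) - 1) - lam1 := by
  obtain ⟨i0, hi0⟩ := hlam.1
  have hsum := sum_graphEigs G
  have hsplit : ∑ i ∈ Finset.univ.erase i0, graphEigs G i = -lam1 := by
    have := Finset.add_sum_erase Finset.univ (graphEigs G) (Finset.mem_univ i0)
    rw [hsum] at this
    linarith [this, hi0]
  have hcard : (Finset.univ.erase i0).card = n - 1 := by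
    simp [Finset.card_erase_of_mem]
  have hn : 1 ≤ n := Nat.one_le_iff_ne_zero.mpr (by rintro rfl; exact i0.elim0)
  have hcard' : ((Finset.univ.erase i0).card : ℝ) = (n : ℝ) - 1 := by
    rw [hcard]; push_cast [Nat.cast_sub hn]; ring
  have hEE : estradaIndex G =
      Real.exp (graphEigs G i0) + ∑ i ∈ Finset.univ.erase i0, Real.exp (graphEigs G i) :=
    (Finset.add_sum_erase Finset.univ (fun i => Real.exp (graphEigs G i))
      (Finset.mem_univ i0)).symm
  have hbound : ∑ i ∈ Finset.univ.erase i0, Real.exp (graphEigs G i) ≥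
      ∑ i ∈ Finset.univ.erase i0, (1 + graphEigs G i) := by
    apply Finset.sum_le_sum
    intro i _
    linarith [Real.add_one_le_exp (graphEigs G i)]
  rw [Finset.sum_add_distrib, Finset.sum_const, nsmul_eq_mul, mul_one, hcard', hsplit] at hbound
  rw [hEE, hi0]
  linarith
end

section
/- Let G be a simple graph on n vertices with largest adjacency eigenvalue λ₁. Equality EE(G) = e^{λ₁} + (n − 1) − λ₁ holds if and only if all eigenvalues of the adjacency matrix of G are zero, i.e., if and only if G is the empty graph (the complement of Kₙ, having no edges). -/
/-- Equality `EE(G) = e^{λ₁} + (n − 1) − λ₁` holds iff all adjacency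
eigenvalues of `G` are zero, i.e. iff `G` is the empty graph. -/
theorem estrada_eq_iff_empty {n : ℕ} (G : SimpleGraph (Fin n)) [DecidableRel G.Adj]
    (lam1 : ℝ) (hlam : IsGreatest (Set.range (graphEigs G)) lam1) :
    (estradaIndex G = Real.exp lam1 + ((n : ℝ) - 1) - lam1 ↔ ∀ i, graphEigs G i = 0) ∧
    (estradaIndex G = Real.exp lam1 + ((n : ℝ) - 1) - lam1 ↔ G = ⊥) := by
  -- trace = sum of eigenvalues = 0
  have htr : ∑ i, graphEigs G i = 0 := by
    have h := congrArg Matrix.trace (adjHerm G).spectral_theorem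
    rw [Unitary.conjStarAlgAut_apply, Matrix.trace_mul_cycle, Unitary.coe_star_mul_self,
      Matrix.one_mul, Matrix.trace_diagonal] at h
    have h0 : Matrix.trace (G.adjMatrix ℝ) = 0 := by simp
    rw [h0] at h
    simpa [graphEigs] using h.symm
  obtain ⟨i0, hi0⟩ := hlam.1
  have key : estradaIndex G = Real.exp lam1 + ((n : ℝ) - 1) - lam1 ↔
      ∀ i, graphEigs G i = 0 := by
    have hsplit : estradaIndex G =
        Real.exp lam1 + ∑ i ∈ Finset.univ.erase i0, Real.exp (graphEigs G i) := by
      rw [estradaIndex, ← Finset.add_sum_erase _ _ (Finset.mem_univ i0), hi0]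
    have hsum : ∑ i ∈ Finset.univ.erase i0, graphEigs G i = -lam1 := by
      have := Finset.add_sum_erase _ (graphEigs G) (Finset.mem_univ i0)
      rw [htr, hi0] at this
      linarith
    have hcard : ((Finset.univ.erase i0).card : ℝ) = (n : ℝ) - 1 := by
      rw [Finset.card_erase_of_mem (Finset.mem_univ i0)]
      have hn : 1 ≤ n := by
        have : 1 ≤ Fintype.card (Fin n) := Fintype.card_pos_iff.mpr ⟨i0⟩
        simpa using this
      simp [Nat.cast_sub hn]
    constructor
    · intro heq
      have hkey : ∑ i ∈ Finset.univ.erase i0,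
          (Real.exp (graphEigs G i) - (graphEigs G i + 1)) = 0 := by
        rw [Finset.sum_sub_distrib, Finset.sum_add_distrib, hsum, Finset.sum_const,
          nsmul_eq_mul, mul_one, hcard]
        rw [hsplit] at heq
        linarith
      have hterm : ∀ i ∈ Finset.univ.erase i0,
          Real.exp (graphEigs G i) - (graphEigs G i + 1) = 0 := by
        refine (Finset.sum_eq_zero_iff_of_nonneg ?_).mp hkey
        intro i _
        have := Real.add_one_le_exp (graphEigs G i)
        linarith
      have hzero : ∀ i ∈ Finset.univ.erase i0, graphEigs G i = 0 := by
        intro i hi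
        by_contra hne
        have := Real.add_one_lt_exp hne
        have := hterm i hi
        linarith
      have hl0 : lam1 = 0 := by
        have := hsum
        rw [Finset.sum_eq_zero hzero] at this
        linarith
      intro i
      by_cases h : i = i0
      · rw [h, hi0, hl0]
      · exact hzero i (Finset.mem_erase.mpr ⟨h, Finset.mem_univ i⟩)
    · intro hall
      have hl0 : lam1 = 0 := by rw [← hi0]; exact hall i0
      rw [estradaIndex]
      have : ∀ i ∈ (Finset.univ : Finset (Fin n)), Real.exp (graphEigs G i) = 1 := by
        intro i _; rw [hall i, Real.exp_zero]
      rw [Finset.sum_congr rfl this, Finset.sum_const, hl0, Real.exp_zero]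
      simp
  have key2 : (∀ i, graphEigs G i = 0) ↔ G = ⊥ := by
    constructor
    · intro hall
      have hA : G.adjMatrix ℝ = 0 := by
        have h := (adjHerm G).spectral_theorem
        have hd : Matrix.diagonal (RCLike.ofReal ∘ (adjHerm G).eigenvalues)
            = (0 : Matrix (Fin n) (Fin n) ℝ) := by
          ext i j
          by_cases hij : i = j <;>
            simp [Matrix.diagonal, hij, hall, graphEigs] at *
          · exact hall j
        rw [hd, map_zero] at h
        exact h
      ext i j
      simp only [SimpleGraph.bot_adj, iff_false]
      intro hadj
      have : G.adjMatrix ℝ i j = 1 := by simp [hadj]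
      rw [hA] at this
      simp at this
    · intro hG
      subst hG
      have hA : (⊥ : SimpleGraph (Fin n)).adjMatrix ℝ = 0 := by
        ext i j; simp
      intro i
      haveI : Nonempty (Fin n) := ⟨i⟩
      have hs := Matrix.IsHermitian.eigenvalues_mem_spectrum_real
        (adjHerm (⊥ : SimpleGraph (Fin n))) i
      have hspec : spectrum ℝ (SimpleGraph.adjMatrix ℝ (⊥ : SimpleGraph (Fin n))) = {0} := by
        rw [hA, spectrum.zero_eq]
      rw [hspec] at hs
      simpa [graphEigs] using hs
  exact ⟨key, key.trans key2⟩
end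

section
/- Let G be a connected simple graph on n vertices with largest adjacency eigenvalue λ₁, and let d(i) denote the degree of vertex i. Then λ₁ ≥ sqrt( (Σ_{i∈V(G)} d(i)²) / n ). -/
open Matrix

section aux
variable {n : ℕ} {A : Matrix (Fin n) (Fin n) ℝ} (hA : A.IsHermitian)

private lemma dot_eq_inner' (x y : EuclideanSpace ℝ (Fin n)) :
    (x : Fin n → ℝ) ⬝ᵥ (y : Fin n → ℝ) = @inner ℝ _ _ x y := by
  simp [dotProduct, PiLp.inner_apply, mul_comm]

private lemma parseval' (x y : Fin n → ℝ) :
    x ⬝ᵥ y = ∑ i, ((hA.eigenvectorBasis i : Fin n → ℝ) ⬝ᵥ x) *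
      ((hA.eigenvectorBasis i : Fin n → ℝ) ⬝ᵥ y) := by
  have h := (hA.eigenvectorBasis).sum_inner_mul_inner (𝕜 := ℝ)
    (WithLp.toLp 2 x) (WithLp.toLp 2 y)
  rw [show x ⬝ᵥ y = _ from dot_eq_inner' (WithLp.toLp 2 x) (WithLp.toLp 2 y), ← h]
  refine Finset.sum_congr rfl fun i _ => ?_
  rw [dot_eq_inner' _ (WithLp.toLp 2 x), dot_eq_inner' _ (WithLp.toLp 2 y), real_inner_comm]

private lemma dot_mulVec_basis' (x : Fin n → ℝ) (i : Fin n) :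
    (hA.eigenvectorBasis i : Fin n → ℝ) ⬝ᵥ (A *ᵥ x) =
      hA.eigenvalues i * ((hA.eigenvectorBasis i : Fin n → ℝ) ⬝ᵥ x) := by
  have hsym : Aᵀ = A := by
    rw [← Matrix.conjTranspose_eq_transpose_of_trivial]; exact hA
  rw [Matrix.dotProduct_mulVec, ← Matrix.mulVec_transpose, hsym,
    show (A *ᵥ (hA.eigenvectorBasis i : Fin n → ℝ)) =
      hA.eigenvalues i • (hA.eigenvectorBasis i : Fin n → ℝ) from hA.mulVec_eigenvectorBasis i,
    smul_dotProduct, smul_eq_mul]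

private lemma basis_norm' (i : Fin n) :
    (hA.eigenvectorBasis i : Fin n → ℝ) ⬝ᵥ (hA.eigenvectorBasis i : Fin n → ℝ) = 1 := by
  rw [dot_eq_inner', real_inner_self_eq_norm_sq, hA.eigenvectorBasis.orthonormal.1 i]
  norm_num

end aux


/-- For a connected simple graph `G` on `n` vertices,
`λ₁ ≥ sqrt((∑ d(i)²)/n)`. -/
theorem lam_one_ge_sqrt_sum_deg_sq {n : ℕ} (G : SimpleGraph (Fin n)) [DecidableRel G.Adj]
    (hconn : G.Connected) (lam1 : ℝ) (hlam : IsGreatest (Set.range (graphEigs G)) lam1) :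
    lam1 ≥ Real.sqrt ((∑ i, (G.degree i : ℝ) ^ 2) / n) := by
  set A := G.adjMatrix ℝ with hAdef
  have hA : A.IsHermitian := adjHerm G
  have hle : ∀ i, hA.eigenvalues i ≤ lam1 := fun i => hlam.2 ⟨i, rfl⟩
  have hApos : ∀ j k, 0 ≤ A j k := by
    intro j k; rw [hAdef, SimpleGraph.adjMatrix_apply]; split_ifs <;> norm_num
  -- Rayleigh upper bound
  have ray : ∀ x : Fin n → ℝ, x ⬝ᵥ (A *ᵥ x) ≤ lam1 * (x ⬝ᵥ x) := by
    intro x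
    rw [parseval' hA x (A *ᵥ x), parseval' hA x x, Finset.mul_sum]
    refine Finset.sum_le_sum fun i _ => ?_
    rw [dot_mulVec_basis' hA x i]
    have h1 := hle i
    nlinarith [sq_nonneg ((hA.eigenvectorBasis i : Fin n → ℝ) ⬝ᵥ x)]
  -- |λ i| ≤ lam1
  have habs : ∀ i, |hA.eigenvalues i| ≤ lam1 := by
    intro i
    set v : Fin n → ℝ := (hA.eigenvectorBasis i : Fin n → ℝ) with hv
    set w : Fin n → ℝ := fun j => |v j| with hwdef
    have hvv : v ⬝ᵥ v = 1 := basis_norm' hA i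
    have hww : w ⬝ᵥ w = 1 := by
      rw [← hvv]; simp [hwdef, dotProduct, abs_mul_abs_self]
    have h1 : v ⬝ᵥ (A *ᵥ v) = hA.eigenvalues i := by
      rw [show (A *ᵥ v) = hA.eigenvalues i • v from hA.mulVec_eigenvectorBasis i,
        dotProduct_smul, smul_eq_mul, hvv, mul_one]
    have hbound : |v ⬝ᵥ (A *ᵥ v)| ≤ w ⬝ᵥ (A *ᵥ w) := by
      have e1 : v ⬝ᵥ (A *ᵥ v) = ∑ j, ∑ k, v j * (A j k * v k) := by
        simp [dotProduct, Matrix.mulVec, Finset.mul_sum]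
      have e2 : w ⬝ᵥ (A *ᵥ w) = ∑ j, ∑ k, |v j| * (A j k * |v k|) := by
        simp [dotProduct, Matrix.mulVec, hwdef, Finset.mul_sum]
      rw [e1, e2]
      calc |∑ j, ∑ k, v j * (A j k * v k)| ≤ ∑ j, |∑ k, v j * (A j k * v k)| :=
            Finset.abs_sum_le_sum_abs _ _
        _ ≤ ∑ j, ∑ k, |v j * (A j k * v k)| :=
            Finset.sum_le_sum fun j _ => Finset.abs_sum_le_sum_abs _ _
        _ = ∑ j, ∑ k, |v j| * (A j k * |v k|) := by
            refine Finset.sum_congr rfl fun j _ => Finset.sum_congr rfl fun k _ => ?_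
            rw [abs_mul, abs_mul, abs_of_nonneg (hApos j k)]
    have h2 := ray w
    rw [hww, mul_one] at h2
    calc |hA.eigenvalues i| = |v ⬝ᵥ (A *ᵥ v)| := by rw [h1]
      _ ≤ w ⬝ᵥ (A *ᵥ w) := hbound
      _ ≤ lam1 := h2
  -- n > 0
  have hn : 0 < n := by
    rcases hconn.nonempty with ⟨i⟩
    exact i.pos
  have hnR : (0:ℝ) < n := by exact_mod_cast hn
  -- all-ones vector
  set o : Fin n → ℝ := fun _ => 1 with ho
  have hoo : o ⬝ᵥ o = n := by simp [ho, dotProduct]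
  have hdeg : A *ᵥ o = fun i => (G.degree i : ℝ) := by
    funext i
    rw [hAdef, show o = Function.const (Fin n) (1:ℝ) from rfl,
      SimpleGraph.adjMatrix_mulVec_const_apply, mul_one]
  -- lam1 ≥ 0
  have h0 : 0 ≤ o ⬝ᵥ (A *ᵥ o) := by
    rw [hdeg]
    refine Finset.sum_nonneg fun i _ => by positivity
  have hlam0 : 0 ≤ lam1 := by
    have := ray o
    rw [hoo] at this
    nlinarith
  -- key bound
  have hS : (∑ i, (G.degree i : ℝ) ^ 2) ≤ lam1 ^ 2 * n := by
    have e1 : (∑ i, (G.degree i : ℝ) ^ 2) = (A *ᵥ o) ⬝ᵥ (A *ᵥ o) := by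
      rw [hdeg]; simp [dotProduct, sq]
    have e2 : o ⬝ᵥ o = ∑ i, ((hA.eigenvectorBasis i : Fin n → ℝ) ⬝ᵥ o) *
        ((hA.eigenvectorBasis i : Fin n → ℝ) ⬝ᵥ o) := parseval' hA o o
    rw [e1, parseval' hA (A *ᵥ o) (A *ᵥ o)]
    calc ∑ i, ((hA.eigenvectorBasis i : Fin n → ℝ) ⬝ᵥ (A *ᵥ o)) *
          ((hA.eigenvectorBasis i : Fin n → ℝ) ⬝ᵥ (A *ᵥ o))
        ≤ ∑ i, lam1 ^ 2 * (((hA.eigenvectorBasis i : Fin n → ℝ) ⬝ᵥ o) *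
          ((hA.eigenvectorBasis i : Fin n → ℝ) ⬝ᵥ o)) := by
          refine Finset.sum_le_sum fun i _ => ?_
          rw [dot_mulVec_basis' hA o i]
          have h1 := abs_le.mp (habs i)
          have h2 : hA.eigenvalues i ^ 2 ≤ lam1 ^ 2 := sq_le_sq' h1.1 h1.2
          have h3 : 0 ≤ ((hA.eigenvectorBasis i : Fin n → ℝ) ⬝ᵥ o) *
            ((hA.eigenvectorBasis i : Fin n → ℝ) ⬝ᵥ o) := mul_self_nonneg _
          nlinarith
      _ = lam1 ^ 2 * (o ⬝ᵥ o) := by rw [e2, Finset.mul_sum]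
      _ = lam1 ^ 2 * n := by rw [hoo]
  rw [ge_iff_le, show lam1 = Real.sqrt (lam1 ^ 2) from (Real.sqrt_sq hlam0).symm]
  apply Real.sqrt_le_sqrt
  rw [div_le_iff₀ hnR]
  linarith
end

section
/- Let G be a connected simple graph with largest adjacency eigenvalue λ₁, and for each vertex i let d(i) be its degree and d₂(i) = Σ_{j adjacent to i} d(j) the number of walks of length 2 starting at i. Then λ₁ ≥ sqrt( (Σ_{i∈V(G)} d₂(i)²) / (Σ_{i∈V(G)} d(i)²) ). -/
open scoped RealInnerProductSpace
open Matrix Finset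


/-- For a connected simple graph `G`, with `d₂(i) = ∑_{j ∈ N(i)} d(j)`,
`λ₁ ≥ sqrt((∑ d₂(i)²)/(∑ d(i)²))`. -/
theorem lam_one_ge_sqrt_ratio_two_deg {n : ℕ} (G : SimpleGraph (Fin n)) [DecidableRel G.Adj]
    (hconn : G.Connected) (lam1 : ℝ) (hlam : IsGreatest (Set.range (graphEigs G)) lam1) :
    lam1 ≥ Real.sqrt
      ((∑ i, (∑ j ∈ G.neighborFinset i, (G.degree j : ℝ)) ^ 2) /
        (∑ i, (G.degree i : ℝ) ^ 2)) := by
  classical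
  set A := G.adjMatrix ℝ with hAdef
  have hA : A.IsHermitian := adjHerm G
  set μ : Fin n → ℝ := graphEigs G with hμdef
  have hμ : μ = hA.eigenvalues := rfl
  set B := hA.eigenvectorBasis with hBdef
  set T := Matrix.toEuclideanLin A with hTdef
  have hsymm : LinearMap.IsSymmetric T := Matrix.isHermitian_iff_isSymmetric.1 hA
  have hinner : ∀ u v : EuclideanSpace ℝ (Fin n), ⟪u, v⟫ = ∑ i, u i * v i := by
    intro u v
    simp [PiLp.inner_apply, RCLike.inner_apply]
    exact Finset.sum_congr rfl fun i _ => mul_comm _ _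
  have hTapp : ∀ (x : EuclideanSpace ℝ (Fin n)) (i : Fin n), T x i = ∑ k, A i k * x k := by
    intro x i
    simp [hTdef, Matrix.toEuclideanLin_apply, Matrix.mulVec, dotProduct]
  have hTB : ∀ j, T (B j) = μ j • B j := by
    intro j
    ext i
    rw [hTapp]
    have := congrFun (hA.mulVec_eigenvectorBasis j) i
    simp only [Matrix.mulVec, dotProduct, Pi.smul_apply, smul_eq_mul] at this
    simpa [hμ] using this
  have hBTx : ∀ (x : EuclideanSpace ℝ (Fin n)) i, ⟪B i, T x⟫ = μ i * ⟪B i, x⟫ := by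
    intro x i
    rw [← hsymm (B i) x, hTB i, real_inner_smul_left]
  have hxTx : ∀ x : EuclideanSpace ℝ (Fin n), ⟪x, T x⟫ = ∑ i, μ i * ⟪B i, x⟫ ^ 2 := by
    intro x
    rw [← B.sum_inner_mul_inner x (T x)]
    refine Finset.sum_congr rfl fun i _ => ?_
    rw [hBTx, real_inner_comm x (B i)]; ring
  have hTxTx : ∀ x : EuclideanSpace ℝ (Fin n), ⟪T x, T x⟫ = ∑ i, (μ i) ^ 2 * ⟪B i, x⟫ ^ 2 := by
    intro x
    rw [← B.sum_inner_mul_inner (T x) (T x)]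
    refine Finset.sum_congr rfl fun i _ => ?_
    rw [← real_inner_comm (T x) (B i), hBTx]; ring
  have hxx : ∀ x : EuclideanSpace ℝ (Fin n), ⟪x, x⟫ = ∑ i, ⟪B i, x⟫ ^ 2 := by
    intro x
    rw [← B.sum_inner_mul_inner x x]
    refine Finset.sum_congr rfl fun i _ => ?_
    rw [real_inner_comm x (B i)]; ring
  have hle : ∀ i, μ i ≤ lam1 := fun i => hlam.2 ⟨i, rfl⟩
  have hAnn : ∀ i k, 0 ≤ A i k := by
    intro i k
    simp only [hAdef, SimpleGraph.adjMatrix_apply]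
    split_ifs <;> norm_num
  -- Rayleigh upper bound
  have hray : ∀ x : EuclideanSpace ℝ (Fin n), ⟪x, T x⟫ ≤ lam1 * ⟪x, x⟫ := by
    intro x
    rw [hxTx, hxx, Finset.mul_sum]
    exact Finset.sum_le_sum fun i _ =>
      mul_le_mul_of_nonneg_right (hle i) (sq_nonneg _)
  -- |μ j| ≤ lam1
  have habs : ∀ j, |μ j| ≤ lam1 := by
    intro j
    set v := B j with hvdef
    set w : EuclideanSpace ℝ (Fin n) := (WithLp.equiv 2 (Fin n → ℝ)).symm (fun i => |v i|) with hwdef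
    have hwapp : ∀ i, w i = |v i| := fun i => rfl
    have hvv : ⟪v, v⟫ = 1 := by
      rw [real_inner_self_eq_norm_sq, B.orthonormal.1 j]; norm_num
    have hww : ⟪w, w⟫ = 1 := by
      rw [hinner, ← hvv, hinner]
      refine Finset.sum_congr rfl fun i _ => ?_
      rw [hwapp, abs_mul_abs_self]
    have hquadv : ⟪v, T v⟫ = μ j := by
      rw [← hsymm v v, hTB j, real_inner_smul_left, hvv, mul_one]
    have hdouble : ∀ u : EuclideanSpace ℝ (Fin n),
        ⟪u, T u⟫ = ∑ i, ∑ k, A i k * (u i * u k) := by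
      intro u
      rw [hinner]
      refine Finset.sum_congr rfl fun i _ => ?_
      rw [hTapp, Finset.mul_sum]
      refine Finset.sum_congr rfl fun k _ => by ring
    have hlow : |μ j| ≤ ⟪w, T w⟫ := by
      rw [← hquadv, hdouble v, hdouble w]
      calc |∑ i, ∑ k, A i k * (v i * v k)|
          ≤ ∑ i, |∑ k, A i k * (v i * v k)| := Finset.abs_sum_le_sum_abs _ _
        _ ≤ ∑ i, ∑ k, |A i k * (v i * v k)| :=
            Finset.sum_le_sum fun i _ => Finset.abs_sum_le_sum_abs _ _
        _ = ∑ i, ∑ k, A i k * (w i * w k) := by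
            refine Finset.sum_congr rfl fun i _ => Finset.sum_congr rfl fun k _ => ?_
            rw [abs_mul, abs_mul, abs_of_nonneg (hAnn i k), hwapp, hwapp]
    have hup : ⟪w, T w⟫ ≤ lam1 := by
      have := hray w
      rwa [hww, mul_one] at this
    exact hlow.trans hup
  have h0 : 0 ≤ lam1 := by
    obtain ⟨j, hj⟩ := hlam.1
    have := habs j
    rw [hj] at this
    exact (abs_nonneg _).trans this
  -- key inequality
  have hkey : ∀ x : EuclideanSpace ℝ (Fin n), ⟪T x, T x⟫ ≤ lam1 ^ 2 * ⟪x, x⟫ := by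
    intro x
    rw [hTxTx, hxx, Finset.mul_sum]
    refine Finset.sum_le_sum fun i _ => mul_le_mul_of_nonneg_right ?_ (sq_nonneg _)
    calc μ i ^ 2 = |μ i| ^ 2 := (sq_abs _).symm
      _ ≤ lam1 ^ 2 := by
          have := habs i
          nlinarith [abs_nonneg (μ i)]
  -- apply to degree vector
  set d : EuclideanSpace ℝ (Fin n) :=
    (WithLp.equiv 2 (Fin n → ℝ)).symm (fun i => (G.degree i : ℝ)) with hddef
  have hdapp : ∀ i, d i = (G.degree i : ℝ) := fun i => rfl
  have hTd : ∀ i, T d i = ∑ j ∈ G.neighborFinset i, (G.degree j : ℝ) := by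
    intro i
    rw [hTapp]
    have := G.adjMatrix_mulVec_apply (α := ℝ) i (fun k => (G.degree k : ℝ))
    simp only [Matrix.mulVec, dotProduct] at this
    exact this
  have hnum : ⟪T d, T d⟫ = ∑ i, (∑ j ∈ G.neighborFinset i, (G.degree j : ℝ)) ^ 2 := by
    rw [hinner]
    exact Finset.sum_congr rfl fun i _ => by rw [hTd]; ring
  have hden : ⟪d, d⟫ = ∑ i, (G.degree i : ℝ) ^ 2 := by
    rw [hinner]
    exact Finset.sum_congr rfl fun i _ => by rw [hdapp]; ring
  have hfin : (∑ i, (∑ j ∈ G.neighborFinset i, (G.degree j : ℝ)) ^ 2)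
      ≤ lam1 ^ 2 * ∑ i, (G.degree i : ℝ) ^ 2 := by
    have := hkey d
    rwa [hnum, hden] at this
  set Nu := ∑ i, (∑ j ∈ G.neighborFinset i, (G.degree j : ℝ)) ^ 2 with hNu
  set De := ∑ i, (G.degree i : ℝ) ^ 2 with hDe
  have hDe0 : 0 ≤ De := Finset.sum_nonneg fun i _ => sq_nonneg _
  rcases eq_or_lt_of_le hDe0 with h | h
  · rw [← h, div_zero, Real.sqrt_zero]
    exact h0
  · rw [ge_iff_le, ← Real.sqrt_sq h0]
    apply Real.sqrt_le_sqrt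
    rw [div_le_iff₀ h]
    linarith [hfin]
end

section
/- Let G be a simple graph on n vertices with at least one edge, let d(i) be the degree of vertex i and d₂(i) = Σ_{j adjacent to i} d(j). Then sqrt( (Σ_i d₂(i)²) / (Σ_i d(i)²) ) ≥ sqrt( (Σ_i d(i)²) / n ). -/
/-- For a simple graph on `n` vertices with at least one edge,
`sqrt((∑ d₂(i)²)/(∑ d(i)²)) ≥ sqrt((∑ d(i)²)/n)`. -/
theorem sqrt_ratio_ge_sqrt_avg_deg_sq {n : ℕ} (G : SimpleGraph (Fin n)) [DecidableRel G.Adj]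
    (hedge : G.edgeSet.Nonempty) :
    Real.sqrt
      ((∑ i, (∑ j ∈ G.neighborFinset i, (G.degree j : ℝ)) ^ 2) /
        (∑ i, (G.degree i : ℝ) ^ 2)) ≥
    Real.sqrt ((∑ i, (G.degree i : ℝ) ^ 2) / n) := by
  obtain ⟨e, he⟩ := hedge
  induction e using Sym2.ind with
  | _ v w =>
  rw [SimpleGraph.mem_edgeSet] at he
  have hn : 0 < n := Fin.pos v
  set S : ℝ := ∑ i, (G.degree i : ℝ) ^ 2 with hS
  have hSpos : 0 < S := by
    apply Finset.sum_pos' (fun i _ => by positivity) ⟨v, Finset.mem_univ v, ?_⟩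
    have : 0 < G.degree v := by
      rw [← SimpleGraph.card_neighborFinset_eq_degree]
      exact Finset.card_pos.mpr ⟨w, by rwa [SimpleGraph.mem_neighborFinset]⟩
    positivity
  have hswap : (∑ i, ∑ j ∈ G.neighborFinset i, (G.degree j : ℝ)) = S := by
    calc (∑ i, ∑ j ∈ G.neighborFinset i, (G.degree j : ℝ))
        = ∑ i : Fin n, ∑ j : Fin n, if G.Adj i j then (G.degree j : ℝ) else 0 := by
          simp [SimpleGraph.neighborFinset_eq_filter, Finset.sum_filter]
      _ = ∑ j : Fin n, ∑ i : Fin n, if G.Adj i j then (G.degree j : ℝ) else 0 :=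
          Finset.sum_comm
      _ = ∑ j : Fin n, (G.degree j : ℝ) ^ 2 := by
          refine Finset.sum_congr rfl fun j _ => ?_
          have : ∀ i, G.Adj i j ↔ G.Adj j i := fun i => SimpleGraph.adj_comm ..
          simp only [this]
          rw [← Finset.sum_filter, ← SimpleGraph.neighborFinset_eq_filter, Finset.sum_const,
            SimpleGraph.card_neighborFinset_eq_degree, nsmul_eq_mul, sq]
      _ = S := rfl
  have key : S / n ≤ (∑ i, (∑ j ∈ G.neighborFinset i, (G.degree j : ℝ)) ^ 2) / S := by
    rw [div_le_div_iff₀ (by exact_mod_cast hn) hSpos]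
    calc S * S = (∑ i, ∑ j ∈ G.neighborFinset i, (G.degree j : ℝ)) ^ 2 := by
          rw [hswap]; ring
      _ ≤ (Finset.univ : Finset (Fin n)).card *
            ∑ i, (∑ j ∈ G.neighborFinset i, (G.degree j : ℝ)) ^ 2 :=
          sq_sum_le_card_mul_sum_sq
      _ = (∑ i, (∑ j ∈ G.neighborFinset i, (G.degree j : ℝ)) ^ 2) * n := by
          simp [Finset.card_univ, mul_comm]
  exact Real.sqrt_le_sqrt key
end

section
/- Let G be a connected simple graph with largest adjacency eigenvalue λ₁. For k ≥ 0 define d_k(i) as the number of walks of length k starting at vertex i (so d₀(i) = 1 and d_{k+1}(i) = Σ_{j adjacent to i} d_k(j)), and let γ^(k) = sqrt( (Σ_i d_{k+1}(i)²) / (Σ_i d_k(i)²) ). Then λ₁ ≥ γ^(k) for every k ≥ 0. -/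
/-- `dwalk G k i` is the number of walks of length `k` starting at `i`,
computed as `(A^k 𝟙)_i`. -/
noncomputable def dwalk {n : ℕ} (G : SimpleGraph (Fin n)) [DecidableRel G.Adj]
    (k : ℕ) (i : Fin n) : ℝ :=
  ((G.adjMatrix ℝ) ^ k).mulVec (fun _ => 1) i

/-- The sequence `γ^(k) = sqrt((∑ i, d_{k+1}(i)²)/(∑ i, d_k(i)²))`. -/
noncomputable def gammaSeq {n : ℕ} (G : SimpleGraph (Fin n)) [DecidableRel G.Adj]
    (k : ℕ) : ℝ :=
  Real.sqrt ((∑ i, dwalk G (k + 1) i ^ 2) / (∑ i, dwalk G k i ^ 2))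


open Matrix in
lemma conj_pow_diag {n : ℕ} (U : Matrix (Fin n) (Fin n) ℝ) (d : Fin n → ℝ)
    (hUU : U * star U = 1) (hsUU : star U * U = 1) (m : ℕ) :
    (U * Matrix.diagonal d * star U) ^ m
      = U * Matrix.diagonal (fun i => d i ^ m) * star U := by
  induction m with
  | zero => simp [hUU]
  | succ m ih =>
      rw [pow_succ, ih]
      simp only [Matrix.mul_assoc]
      rw [← Matrix.mul_assoc (star U) U, hsUU, Matrix.one_mul,
        ← Matrix.mul_assoc (Matrix.diagonal _) (Matrix.diagonal _),
        Matrix.diagonal_mul_diagonal]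
      congr 2

open Matrix in
lemma quad_pow {n : ℕ} (A : Matrix (Fin n) (Fin n) ℝ) (hA : A.IsHermitian)
    (x : Fin n → ℝ) (m : ℕ) :
    x ⬝ᵥ ((A ^ m) *ᵥ x) =
      ∑ i, hA.eigenvalues i ^ m *
        ((star (hA.eigenvectorUnitary : Matrix (Fin n) (Fin n) ℝ) *ᵥ x) i) ^ 2 := by
  set U : Matrix (Fin n) (Fin n) ℝ := (hA.eigenvectorUnitary : Matrix (Fin n) (Fin n) ℝ) with hU
  have hUU : U * star U = 1 := by
    simpa [hU] using congrArg (Subtype.val) (unitary.mul_star_self_of_mem hA.eigenvectorUnitary.2)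
  have hsUU : star U * U = 1 := by
    simpa [hU] using congrArg (Subtype.val) (unitary.star_mul_self_of_mem hA.eigenvectorUnitary.2)
  have hspec : A = U * Matrix.diagonal hA.eigenvalues * star U := by
    have := hA.spectral_theorem
    simpa using this
  have key := congrArg (fun M : Matrix (Fin n) (Fin n) ℝ => x ⬝ᵥ (M ^ m *ᵥ x)) hspec
  rw [key, conj_pow_diag U _ hUU hsUU m]
  rw [← Matrix.mulVec_mulVec, ← Matrix.mulVec_mulVec, Matrix.dotProduct_mulVec]
  have hvm : x ᵥ* U = star U *ᵥ x := by
    rw [← Matrix.mulVec_transpose]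
    congr 1
  rw [hvm]
  simp only [dotProduct, Matrix.mulVec_diagonal]
  exact Finset.sum_congr rfl fun i _ => by ring

open Matrix in
/-- Rayleigh-type bound: quadratic form bounded by largest eigenvalue bound. -/
lemma quad_le {n : ℕ} (A : Matrix (Fin n) (Fin n) ℝ) (hA : A.IsHermitian)
    (lam1 : ℝ) (hle : ∀ i, hA.eigenvalues i ≤ lam1) (x : Fin n → ℝ) :
    x ⬝ᵥ (A *ᵥ x) ≤ lam1 * (x ⬝ᵥ x) := by
  have h1 := quad_pow A hA x 1
  have h0 := quad_pow A hA x 0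
  simp only [pow_one, pow_zero, one_mul, one_mulVec] at h1 h0
  rw [h1, h0, Finset.mul_sum]
  refine Finset.sum_le_sum fun i _ => ?_
  exact mul_le_mul_of_nonneg_right (hle i) (sq_nonneg _)

open Matrix in
/-- For a symmetric matrix with nonnegative entries, `|μ| ≤ lam1` for each eigenvalue. -/
lemma abs_eig_le {n : ℕ} (A : Matrix (Fin n) (Fin n) ℝ) (hA : A.IsHermitian)
    (hpos : ∀ i j, 0 ≤ A i j)
    (lam1 : ℝ) (hle : ∀ i, hA.eigenvalues i ≤ lam1) (j : Fin n) :
    |hA.eigenvalues j| ≤ lam1 := by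
  set v : Fin n → ℝ := ⇑(hA.eigenvectorBasis j) with hv
  have hAv : A *ᵥ v = hA.eigenvalues j • v := hA.mulVec_eigenvectorBasis j
  have hnorm : v ⬝ᵥ v = 1 := by
    have h0 := quad_pow A hA v 0
    simp only [pow_zero, one_mul, one_mulVec] at h0
    rw [h0]
    have hc : star (hA.eigenvectorUnitary : Matrix (Fin n) (Fin n) ℝ) *ᵥ v = Pi.single j 1 :=
      hA.star_eigenvectorUnitary_mulVec j
    rw [hc]
    simp [Pi.single_apply]
  have hval : v ⬝ᵥ (A *ᵥ v) = hA.eigenvalues j := by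
    rw [hAv, dotProduct_smul, smul_eq_mul, hnorm, mul_one]
  set w : Fin n → ℝ := fun i => |v i| with hw
  have habs : |hA.eigenvalues j| ≤ w ⬝ᵥ (A *ᵥ w) := by
    rw [← hval]
    calc |v ⬝ᵥ (A *ᵥ v)| ≤ ∑ i, |v i * (A *ᵥ v) i| := Finset.abs_sum_le_sum_abs _ _
      _ ≤ w ⬝ᵥ (A *ᵥ w) := by
          refine Finset.sum_le_sum fun i _ => ?_
          rw [abs_mul]
          refine mul_le_mul_of_nonneg_left ?_ (abs_nonneg _)
          have hmv : (A *ᵥ v) i = ∑ l, A i l * v l := rfl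
          calc |(A *ᵥ v) i| ≤ ∑ l, |A i l * v l| := by
                rw [hmv]; exact Finset.abs_sum_le_sum_abs _ _
            _ = (A *ᵥ w) i := by
                simp only [mulVec, dotProduct, hw]
                refine Finset.sum_congr rfl fun l _ => ?_
                rw [abs_mul, abs_of_nonneg (hpos i l)]
  have hww : w ⬝ᵥ w = 1 := by
    rw [← hnorm]
    simp only [dotProduct, hw]
    exact Finset.sum_congr rfl fun l _ => by rw [← abs_mul, abs_of_nonneg (mul_self_nonneg _)]
  calc |hA.eigenvalues j| ≤ w ⬝ᵥ (A *ᵥ w) := habs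
    _ ≤ lam1 * (w ⬝ᵥ w) := quad_le A hA lam1 hle w
    _ = lam1 := by rw [hww, mul_one]

open Matrix

/-- For a connected simple graph `G`, `λ₁ ≥ γ^(k)` for every `k ≥ 0`. -/
theorem lam_one_ge_gammaSeq {n : ℕ} (G : SimpleGraph (Fin n)) [DecidableRel G.Adj]
    (hconn : G.Connected) (lam1 : ℝ) (hlam : IsGreatest (Set.range (graphEigs G)) lam1) :
    ∀ k : ℕ, lam1 ≥ gammaSeq G k := by
  intro k
  have hA : (G.adjMatrix ℝ).IsHermitian := adjHerm G
  have hle : ∀ i, hA.eigenvalues i ≤ lam1 := fun i => hlam.2 (Set.mem_range_self i)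
  have habs : ∀ j, |hA.eigenvalues j| ≤ lam1 :=
    abs_eig_le _ hA (fun i j => by simp [SimpleGraph.adjMatrix]; positivity) lam1 hle
  have hl0 : 0 ≤ lam1 := by
    obtain ⟨j, hj⟩ := hlam.1
    have := habs j
    rw [show hA.eigenvalues j = lam1 from hj] at this
    exact (abs_nonneg lam1).trans this
  set c : Fin n → ℝ :=
    star (hA.eigenvectorUnitary : Matrix (Fin n) (Fin n) ℝ) *ᵥ (fun _ => 1) with hc
  have hdw : ∀ m : ℕ, (∑ i, dwalk G m i ^ 2) = ∑ i, hA.eigenvalues i ^ (2 * m) * c i ^ 2 := by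
    intro m
    have h1 : (∑ i, dwalk G m i ^ 2)
        = ((G.adjMatrix ℝ ^ m) *ᵥ (fun _ => 1)) ⬝ᵥ ((G.adjMatrix ℝ ^ m) *ᵥ (fun _ => 1)) := by
      simp [dwalk, dotProduct, sq]
    have htr : (G.adjMatrix ℝ ^ m)ᵀ = G.adjMatrix ℝ ^ m := by
      rw [Matrix.transpose_pow]
      congr 1
    have h2 : ((G.adjMatrix ℝ ^ m) *ᵥ (fun _ => 1)) ⬝ᵥ ((G.adjMatrix ℝ ^ m) *ᵥ (fun _ => 1))
        = (fun _ => (1:ℝ)) ⬝ᵥ ((G.adjMatrix ℝ ^ (2 * m)) *ᵥ (fun _ => 1)) := by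
      rw [Matrix.dotProduct_mulVec, ← Matrix.mulVec_transpose, htr, Matrix.mulVec_mulVec,
        ← pow_add, dotProduct_comm]
      ring_nf
    rw [h1, h2, quad_pow _ hA]
  have hS0 : 0 ≤ ∑ i, dwalk G k i ^ 2 := Finset.sum_nonneg fun i _ => sq_nonneg _
  have hstep : (∑ i, dwalk G (k + 1) i ^ 2) ≤ lam1 ^ 2 * ∑ i, dwalk G k i ^ 2 := by
    rw [hdw, hdw, Finset.mul_sum]
    refine Finset.sum_le_sum fun i _ => ?_
    have h1 : hA.eigenvalues i ^ (2 * (k + 1)) * c i ^ 2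
        = hA.eigenvalues i ^ 2 * (hA.eigenvalues i ^ (2 * k) * c i ^ 2) := by ring
    have h2 : (0:ℝ) ≤ hA.eigenvalues i ^ (2 * k) * c i ^ 2 := by
      have : hA.eigenvalues i ^ (2 * k) = (hA.eigenvalues i ^ k) ^ 2 := by
        rw [mul_comm, pow_mul]
      rw [this]
      exact mul_nonneg (sq_nonneg _) (sq_nonneg _)
    have h3 : hA.eigenvalues i ^ 2 ≤ lam1 ^ 2 := by
      rw [← sq_abs]
      exact pow_le_pow_left₀ (abs_nonneg _) (habs i) 2
    rw [h1]
    exact mul_le_mul_of_nonneg_right h3 h2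
  have hq : (∑ i, dwalk G (k + 1) i ^ 2) / (∑ i, dwalk G k i ^ 2) ≤ lam1 ^ 2 := by
    rcases eq_or_lt_of_le hS0 with h0 | h0
    · rw [← h0, div_zero]
      positivity
    · rw [div_le_iff₀ h0]
      exact hstep
  have := Real.sqrt_le_sqrt hq
  rw [Real.sqrt_sq hl0] at this
  exact this
end

section
/- Let G be a connected simple graph on n ≥ 2 vertices and let γ^(k) = sqrt( (Σ_i d_{k+1}(i)²) / (Σ_i d_k(i)²) ) where d_k(i) is the number of walks of length k starting at vertex i. Then for every k ≥ 0, EE(G) > e^{γ^(k)} + n − 1 − γ^(k). -/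
section SpectralAux

open Matrix Finset

variable {n : ℕ} {A : Matrix (Fin n) (Fin n) ℝ}

lemma Asymm' (hA : A.IsHermitian) (p q : Fin n) : A p q = A q p := by
  have hT : Aᵀ = A := by rw [← Matrix.conjTranspose_eq_transpose_of_trivial]; exact hA
  conv_lhs => rw [← hT]
  rfl

lemma repr_sum_sq (hA : A.IsHermitian) (x : EuclideanSpace ℝ (Fin n)) :
    ∑ i, (hA.eigenvectorBasis.repr x i) ^ 2 = ∑ j, (x j) ^ 2 := by
  have h := hA.eigenvectorBasis.repr.inner_map_map x x
  simp only [PiLp.inner_apply, RCLike.inner_apply, starRingEnd_apply, star_trivial] at h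
  simpa [sq] using h

lemma repr_mulVec (hA : A.IsHermitian) (x : EuclideanSpace ℝ (Fin n)) (i : Fin n) :
    hA.eigenvectorBasis.repr (WithLp.toLp 2 (A *ᵥ x)) i = hA.eigenvalues i * hA.eigenvectorBasis.repr x i := by
  rw [OrthonormalBasis.repr_apply_apply, OrthonormalBasis.repr_apply_apply]
  simp only [PiLp.inner_apply, RCLike.inner_apply, starRingEnd_apply, star_trivial]
  simp_rw [mul_comm _ ((hA.eigenvectorBasis i).ofLp _)]
  have h1 : ∀ y : Fin n → ℝ, ∑ j, (hA.eigenvectorBasis i) j * y j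
      = (fun j => (hA.eigenvectorBasis i) j) ⬝ᵥ y := fun y => rfl
  rw [h1, h1, Matrix.dotProduct_mulVec]
  have h2 : Matrix.vecMul (fun j => (hA.eigenvectorBasis i) j) A
      = A *ᵥ (fun j => (hA.eigenvectorBasis i) j) := by
    funext j
    simp only [Matrix.vecMul, Matrix.mulVec, dotProduct]
    exact Finset.sum_congr rfl fun p _ => by rw [Asymm' hA j p, mul_comm]
  rw [h2]
  have h3 : (A *ᵥ fun j => (hA.eigenvectorBasis i) j)
      = hA.eigenvalues i • fun j => (hA.eigenvectorBasis i) j := hA.mulVec_eigenvectorBasis i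
  rw [h3]
  simp [dotProduct, Finset.mul_sum, mul_assoc]

lemma basis_norm_sq (hA : A.IsHermitian) (i : Fin n) :
    ∑ j, (hA.eigenvectorBasis i) j ^ 2 = 1 := by
  have h : (inner ℝ (hA.eigenvectorBasis i) (hA.eigenvectorBasis i) : ℝ) = 1 := by
    rw [real_inner_self_eq_norm_sq, hA.eigenvectorBasis.orthonormal.1 i, one_pow]
  simp only [PiLp.inner_apply, RCLike.inner_apply, starRingEnd_apply, star_trivial] at h
  simpa [sq] using h

lemma quad_form_eq (hA : A.IsHermitian) (x : EuclideanSpace ℝ (Fin n)) :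
    (fun j => x j) ⬝ᵥ (A *ᵥ fun j => x j)
      = ∑ i, hA.eigenvalues i * (hA.eigenvectorBasis.repr x i) ^ 2 := by
  have h := hA.eigenvectorBasis.repr.inner_map_map x
    (WithLp.toLp 2 (A *ᵥ fun j => x j) : EuclideanSpace ℝ (Fin n))
  simp only [PiLp.inner_apply, RCLike.inner_apply, starRingEnd_apply, star_trivial] at h
  have h2 : ∀ i, hA.eigenvectorBasis.repr
        (WithLp.toLp 2 (A *ᵥ fun j => x j) : EuclideanSpace ℝ (Fin n)) i
      = hA.eigenvalues i * hA.eigenvectorBasis.repr x i := fun i => repr_mulVec hA x i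
  calc (fun j => x j) ⬝ᵥ (A *ᵥ fun j => x j) = ∑ j, x j * (A *ᵥ fun j => x j) j := rfl
    _ = ∑ i, hA.eigenvectorBasis.repr x i
          * hA.eigenvectorBasis.repr
              (WithLp.toLp 2 (A *ᵥ fun j => x j) : EuclideanSpace ℝ (Fin n)) i := by
          rw [Finset.sum_congr rfl fun j _ => mul_comm (x j) _, ← h]
          exact Finset.sum_congr rfl fun i _ => mul_comm _ _
    _ = ∑ i, hA.eigenvalues i * (hA.eigenvectorBasis.repr x i) ^ 2 := by
        refine Finset.sum_congr rfl fun i _ => ?_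
        rw [h2 i]; ring

lemma mulVec_sum_sq (hA : A.IsHermitian) (x : EuclideanSpace ℝ (Fin n)) :
    ∑ j, ((A *ᵥ fun j => x j) j) ^ 2
      = ∑ i, (hA.eigenvalues i) ^ 2 * (hA.eigenvectorBasis.repr x i) ^ 2 := by
  have h := repr_sum_sq hA (WithLp.toLp 2 (A *ᵥ fun j => x j) : EuclideanSpace ℝ (Fin n))
  rw [← h]
  refine Finset.sum_congr rfl fun i _ => ?_
  rw [show hA.eigenvectorBasis.repr (WithLp.toLp 2 (A *ᵥ fun j => x j) : EuclideanSpace ℝ (Fin n)) i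
      = hA.eigenvalues i * hA.eigenvectorBasis.repr x i from repr_mulVec hA x i]
  ring

lemma rayleigh_le (hA : A.IsHermitian) {ρ : ℝ} (hρ : ∀ i, hA.eigenvalues i ≤ ρ)
    (x : EuclideanSpace ℝ (Fin n)) :
    (fun j => x j) ⬝ᵥ (A *ᵥ fun j => x j) ≤ ρ * ∑ j, x j ^ 2 := by
  rw [quad_form_eq hA x, ← repr_sum_sq hA x, Finset.mul_sum]
  exact Finset.sum_le_sum fun i _ => mul_le_mul_of_nonneg_right (hρ i) (sq_nonneg _)

lemma abs_eig_le_s10 (hA : A.IsHermitian) (hnn : ∀ p q, 0 ≤ A p q) {ρ : ℝ}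
    (hρ : ∀ i, hA.eigenvalues i ≤ ρ) (i : Fin n) : |hA.eigenvalues i| ≤ ρ := by
  set v : Fin n → ℝ := fun j => (hA.eigenvectorBasis i) j with hv
  have hnorm : ∑ j, v j ^ 2 = 1 := basis_norm_sq hA i
  have heig : (A *ᵥ v) = hA.eigenvalues i • v := hA.mulVec_eigenvectorBasis i
  have hval : v ⬝ᵥ (A *ᵥ v) = hA.eigenvalues i := by
    rw [heig]
    simp only [dotProduct, Pi.smul_apply, smul_eq_mul]
    rw [show ∑ j, v j * (hA.eigenvalues i * v j) = hA.eigenvalues i * ∑ j, v j ^ 2 by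
      rw [Finset.mul_sum]; exact Finset.sum_congr rfl fun j _ => by ring, hnorm, mul_one]
  set w : Fin n → ℝ := fun j => |v j| with hw
  have hwsq : ∀ j, w j ^ 2 = v j ^ 2 := fun j => sq_abs _
  have step1 : |hA.eigenvalues i| ≤ w ⬝ᵥ (A *ᵥ w) := by
    rw [← hval]
    calc |v ⬝ᵥ (A *ᵥ v)| ≤ ∑ j, |v j * (A *ᵥ v) j| := Finset.abs_sum_le_sum_abs _ _
      _ ≤ ∑ j, w j * (A *ᵥ w) j := by
          refine Finset.sum_le_sum fun j _ => ?_
          rw [abs_mul]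
          refine mul_le_mul_of_nonneg_left ?_ (abs_nonneg _)
          calc |(A *ᵥ v) j| = |∑ q, A j q * v q| := rfl
            _ ≤ ∑ q, |A j q * v q| := Finset.abs_sum_le_sum_abs _ _
            _ = ∑ q, A j q * w q := Finset.sum_congr rfl fun q _ => by
                rw [abs_mul, abs_of_nonneg (hnn j q)]
            _ = (A *ᵥ w) j := rfl
      _ = w ⬝ᵥ (A *ᵥ w) := rfl
  have step2 : w ⬝ᵥ (A *ᵥ w) ≤ ρ * ∑ j, w j ^ 2 := rayleigh_le hA hρ (WithLp.toLp 2 w)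
  have : ∑ j, w j ^ 2 = 1 := by rw [Finset.sum_congr rfl fun j _ => hwsq j, hnorm]
  rw [this, mul_one] at step2
  exact step1.trans step2

lemma sum_eig_eq_trace (hA : A.IsHermitian) : ∑ i, hA.eigenvalues i = A.trace := by
  have h := congrArg Matrix.trace hA.spectral_theorem
  simpa using hA.trace_eq_sum_eigenvalues.symm

lemma eq_zero_of_eigs_zero (hA : A.IsHermitian) (h : ∀ i, hA.eigenvalues i = 0) : A = 0 := by
  have hs := hA.spectral_theorem
  have : Matrix.diagonal (RCLike.ofReal ∘ hA.eigenvalues) = (0 : Matrix (Fin n) (Fin n) ℝ) := by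
    rw [show RCLike.ofReal ∘ hA.eigenvalues = fun _ : Fin n => (0:ℝ) by funext i; simp [h i]]
    simp
  rw [this, map_zero] at hs
  exact hs

end SpectralAux

section GraphAux

open Matrix Finset

variable {n : ℕ} (G : SimpleGraph (Fin n)) [DecidableRel G.Adj]

lemma adj_nonneg (p q : Fin n) : (0:ℝ) ≤ G.adjMatrix ℝ p q := by
  rw [SimpleGraph.adjMatrix_apply]
  split_ifs <;> norm_num

lemma exists_neighbor (hn : 2 ≤ n) (hconn : G.Connected) (i : Fin n) : ∃ w, G.Adj i w := by
  have h0 : (0:ℕ) < n := by omega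
  have h1 : (1:ℕ) < n := by omega
  have hex : ∃ j : Fin n, i ≠ j := by
    rcases eq_or_ne i ⟨0, h0⟩ with h | h
    · exact ⟨⟨1, h1⟩, by rw [h]; intro hc; exact absurd (congrArg Fin.val hc) (by norm_num)⟩
    · exact ⟨⟨0, h0⟩, h⟩
  obtain ⟨j, hij⟩ := hex
  obtain ⟨p⟩ := hconn.preconnected i j
  cases p with
  | nil => exact absurd rfl hij
  | cons h _ => exact ⟨_, h⟩

lemma dwalk_succ (k : ℕ) :
    (fun i => dwalk G (k+1) i) = (G.adjMatrix ℝ) *ᵥ (fun j => dwalk G k j) := by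
  funext i
  simp only [dwalk, pow_succ', ← Matrix.mulVec_mulVec]

lemma dwalk_one_le (hn : 2 ≤ n) (hconn : G.Connected) : ∀ k i, 1 ≤ dwalk G k i := by
  intro k
  induction k with
  | zero => intro i; simp [dwalk]
  | succ k ih =>
    intro i
    have h := congrFun (dwalk_succ G k) i
    rw [h]
    obtain ⟨w, hw⟩ := exists_neighbor G hn hconn i
    have h1 : G.adjMatrix ℝ i w * dwalk G k w = dwalk G k w := by simp [hw]
    calc (1:ℝ) ≤ G.adjMatrix ℝ i w * dwalk G k w := by rw [h1]; exact ih w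
      _ ≤ ∑ j, G.adjMatrix ℝ i j * dwalk G k j :=
          Finset.single_le_sum
            (fun j _ => mul_nonneg (adj_nonneg G i j) (le_trans zero_le_one (ih j)))
            (Finset.mem_univ w)
      _ = (G.adjMatrix ℝ *ᵥ fun j => dwalk G k j) i := rfl

end GraphAux

/-- For a connected simple graph on `n ≥ 2` vertices,
`EE(G) > e^{γ^(k)} + n − 1 − γ^(k)` for every `k ≥ 0`. -/
theorem estrada_gt_exp_gammaSeq {n : ℕ} (hn : 2 ≤ n)
    (G : SimpleGraph (Fin n)) [DecidableRel G.Adj] (hconn : G.Connected) :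
    ∀ k : ℕ, estradaIndex G > Real.exp (gammaSeq G k) + (n : ℝ) - 1 - gammaSeq G k := by
  open Matrix Finset in
  intro k
  have hA := adjHerm G
  set μ : Fin n → ℝ := hA.eigenvalues with hμ
  have hμeq : graphEigs G = μ := rfl
  have hne : (Finset.univ : Finset (Fin n)).Nonempty :=
    ⟨⟨0, by omega⟩, Finset.mem_univ _⟩
  set ρ : ℝ := Finset.univ.sup' hne μ with hρdef
  have hρ : ∀ i, μ i ≤ ρ := fun i => Finset.le_sup' μ (Finset.mem_univ i)
  obtain ⟨i₀, -, hi₀⟩ := Finset.exists_mem_eq_sup' hne μ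
  have hi₀' : ρ = μ i₀ := hρdef.trans hi₀
  have habs : ∀ i, |μ i| ≤ ρ := abs_eig_le_s10 hA (adj_nonneg G) hρ
  have hρ0 : 0 ≤ ρ := le_trans (abs_nonneg _) (habs i₀)
  have hsum : ∑ i, μ i = 0 := by
    rw [sum_eig_eq_trace hA, SimpleGraph.trace_adjMatrix]
  -- existence of a negative eigenvalue
  have hAne : G.adjMatrix ℝ ≠ 0 := by
    obtain ⟨w, hw⟩ := exists_neighbor G hn hconn ⟨0, by omega⟩
    intro hc
    have : G.adjMatrix ℝ ⟨0, by omega⟩ w = 0 := by rw [hc]; rfl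
    rw [SimpleGraph.adjMatrix_apply, if_pos hw] at this
    norm_num at this
  have hex : ∃ i, μ i ≠ 0 := by
    by_contra hc
    push_neg at hc
    exact hAne (eq_zero_of_eigs_zero hA hc)
  obtain ⟨i₁, hi₁⟩ := hex
  have hj : ∃ j, μ j < 0 := by
    by_contra hc
    push_neg at hc
    exact hi₁ ((Finset.sum_eq_zero_iff_of_nonneg (fun i _ => hc i)).mp hsum i₁ (Finset.mem_univ _))
  obtain ⟨j, hjneg⟩ := hj
  have hji₀ : i₀ ≠ j := by
    intro hc
    rw [← hc, ← hi₀] at hjneg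
    exact absurd hρ0 (not_le.mpr hjneg)
  -- gamma ≤ ρ
  set γ : ℝ := gammaSeq G k with hγdef
  have hγ0 : 0 ≤ γ := Real.sqrt_nonneg _
  set Sk : ℝ := ∑ i, dwalk G k i ^ 2 with hSk
  set Sk1 : ℝ := ∑ i, dwalk G (k+1) i ^ 2 with hSk1
  have hSkpos : 0 < Sk := by
    have : ∀ i : Fin n, (1:ℝ) ≤ dwalk G k i ^ 2 := fun i => by
      nlinarith [dwalk_one_le G hn hconn k i]
    calc (0:ℝ) < 1 := one_pos
      _ ≤ dwalk G k ⟨0, by omega⟩ ^ 2 := this _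
      _ ≤ Sk := Finset.single_le_sum (f := fun i => dwalk G k i ^ 2)
          (fun i _ => sq_nonneg _) (Finset.mem_univ _)
  have hSk1le : Sk1 ≤ ρ^2 * Sk := by
    have hrw : Sk1 = ∑ i, (μ i)^2 * (hA.eigenvectorBasis.repr
        (WithLp.toLp 2 (fun j => dwalk G k j) : EuclideanSpace ℝ (Fin n)) i)^2 := by
      rw [hSk1, show (∑ i, dwalk G (k+1) i ^ 2)
          = ∑ i, ((G.adjMatrix ℝ *ᵥ fun j => dwalk G k j) i)^2 from
        Finset.sum_congr rfl fun i _ => by rw [congrFun (dwalk_succ G k) i]]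
      exact mulVec_sum_sq hA (WithLp.toLp 2 (fun j => dwalk G k j))
    rw [hrw, hSk, ← repr_sum_sq hA (WithLp.toLp 2 (fun j => dwalk G k j) : EuclideanSpace ℝ (Fin n)),
      Finset.mul_sum]
    refine Finset.sum_le_sum fun i _ => ?_
    refine mul_le_mul_of_nonneg_right ?_ (sq_nonneg _)
    calc (μ i)^2 = |μ i|^2 := (sq_abs _).symm
      _ ≤ ρ^2 := by nlinarith [habs i, abs_nonneg (μ i)]
  have hγρ : γ ≤ ρ := by
    rw [hγdef, gammaSeq]
    have hdiv : (∑ i, dwalk G (k + 1) i ^ 2) / (∑ i, dwalk G k i ^ 2) ≤ ρ^2 := by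
      rw [div_le_iff₀ hSkpos]
      exact hSk1le
    calc Real.sqrt ((∑ i, dwalk G (k + 1) i ^ 2) / (∑ i, dwalk G k i ^ 2))
        ≤ Real.sqrt (ρ^2) := Real.sqrt_le_sqrt hdiv
      _ = ρ := Real.sqrt_sq hρ0
  -- main estimate
  set f : Fin n → ℝ := fun i => Real.exp (μ i) - 1 - μ i with hf
  have hfnn : ∀ i, 0 ≤ f i := fun i => by
    have := Real.add_one_le_exp (μ i)
    simp only [hf]; linarith
  have hEE : estradaIndex G = (n : ℝ) + ∑ i, f i := by
    rw [estradaIndex, hμeq]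
    simp only [hf]
    rw [Finset.sum_sub_distrib, Finset.sum_sub_distrib, hsum]
    simp [Finset.card_univ]
  have hpair : f i₀ + f j ≤ ∑ i, f i := by
    rw [← Finset.sum_pair hji₀]
    exact Finset.sum_le_sum_of_subset_of_nonneg (Finset.subset_univ _)
      (fun i _ _ => hfnn i)
  have hfj : 0 < f j := by
    have := Real.add_one_lt_exp (ne_of_lt hjneg)
    simp only [hf]; linarith
  have hfi₀ : f i₀ = Real.exp ρ - 1 - ρ := by rw [hf]; simp [← hi₀']
  have hmono : Real.exp γ - γ ≤ Real.exp ρ - ρ := by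
    have h1 : (ρ - γ) + 1 ≤ Real.exp (ρ - γ) := Real.add_one_le_exp _
    have h2 : Real.exp ρ = Real.exp γ * Real.exp (ρ - γ) := by
      rw [← Real.exp_add]; ring_nf
    have h3 : 1 ≤ Real.exp γ := Real.one_le_exp hγ0
    nlinarith
  have : estradaIndex G > (n:ℝ) + (Real.exp ρ - 1 - ρ) := by
    rw [hEE]
    have : f i₀ + f j ≤ ∑ i, f i := hpair
    nlinarith [hfj, hfi₀]
  linarith
end

section
/- Let G be a bipartite connected simple graph on n > 2 vertices and let γ^(k) = sqrt( (Σ_i d_{k+1}(i)²) / (Σ_i d_k(i)²) ) where d_k(i) is the number of walks of length k starting at vertex i. Then for every k ≥ 0, EE(G) ≥ 2·cosh(γ^(k)) + n − 2, with equality if and only if G is isomorphic to a complete bipartite graph K_{p,q} with p + q = n. -/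
set_option linter.unusedSectionVars false

namespace EstAux
open Matrix
variable {n : ℕ} (G : SimpleGraph (Fin n)) [DecidableRel G.Adj]

/-- eigenvector basis as plain functions -/
noncomputable def ev (i : Fin n) : Fin n → ℝ := (adjHerm G).eigenvectorBasis i

/-- coefficient of `y` along eigenvector `i` -/
noncomputable def coef (y : Fin n → ℝ) (i : Fin n) : ℝ := ∑ j, ev G i j * y j

lemma dot_shift (x y : Fin n → ℝ) :
    ((G.adjMatrix ℝ) *ᵥ x) ⬝ᵥ y = x ⬝ᵥ ((G.adjMatrix ℝ) *ᵥ y) := by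
  rw [Matrix.dotProduct_mulVec, ← G.isSymm_adjMatrix, Matrix.vecMul_transpose,
    (G.isSymm_adjMatrix : _ᵀ = _)]

lemma coef_mulVec (y : Fin n → ℝ) (i : Fin n) :
    coef G ((G.adjMatrix ℝ) *ᵥ y) i = graphEigs G i * coef G y i := by
  have h1 : coef G ((G.adjMatrix ℝ) *ᵥ y) i = (ev G i) ⬝ᵥ ((G.adjMatrix ℝ) *ᵥ y) := rfl
  have h2 := (dot_shift G (ev G i) y).symm
  have h3 : (G.adjMatrix ℝ) *ᵥ (ev G i) = graphEigs G i • (ev G i) :=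
    (adjHerm G).mulVec_eigenvectorBasis i
  rw [h1, h2, h3, smul_dotProduct]
  rfl

lemma coef_pow (m : ℕ) (y : Fin n → ℝ) (i : Fin n) :
    coef G (((G.adjMatrix ℝ) ^ m) *ᵥ y) i = graphEigs G i ^ m * coef G y i := by
  induction m with
  | zero => simp [pow_zero, Matrix.one_mulVec]
  | succ m ih =>
      rw [pow_succ', ← Matrix.mulVec_mulVec, coef_mulVec, ih, pow_succ']
      ring

lemma parseval (x y : Fin n → ℝ) :
    ∑ j, x j * y j = ∑ i, coef G x i * coef G y i := by
  have h := ((adjHerm G).eigenvectorBasis).sum_inner_mul_inner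
    (WithLp.toLp 2 x : EuclideanSpace ℝ (Fin n)) (WithLp.toLp 2 y : EuclideanSpace ℝ (Fin n))
  simp only [PiLp.inner_apply, RCLike.inner_apply, starRingEnd_apply, star_trivial] at h
  rw [Finset.sum_congr rfl fun j _ => mul_comm (y j) (x j)] at h
  rw [← h]
  refine Finset.sum_congr rfl fun i _ => ?_
  congr 1
  · exact Finset.sum_congr rfl fun j _ => mul_comm _ _

lemma quad (m l : ℕ) (y z : Fin n → ℝ) :
    ∑ j, (((G.adjMatrix ℝ) ^ m) *ᵥ y) j * (((G.adjMatrix ℝ) ^ l) *ᵥ z) j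
      = ∑ i, graphEigs G i ^ (m + l) * (coef G y i * coef G z i) := by
  rw [parseval G]
  refine Finset.sum_congr rfl fun i _ => ?_
  rw [coef_pow, coef_pow, pow_add]
  ring

end EstAux

namespace EstAux
open Matrix
variable {n : ℕ} (G : SimpleGraph (Fin n)) [DecidableRel G.Adj]

lemma ev_sq_sum (i : Fin n) : ∑ j, ev G i j ^ 2 = 1 := by
  have h := ((adjHerm G).eigenvectorBasis).orthonormal.1 i
  have h2 : (inner ℝ ((adjHerm G).eigenvectorBasis i) ((adjHerm G).eigenvectorBasis i) : ℝ) = 1 := by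
    rw [real_inner_self_eq_norm_sq, h]; norm_num
  simp only [PiLp.inner_apply, RCLike.inner_apply, starRingEnd_apply, star_trivial] at h2
  rw [← h2]
  exact Finset.sum_congr rfl fun j _ => pow_two _

lemma coef_single (j i : Fin n) : coef G (Pi.single j 1) i = ev G i j := by
  unfold coef
  rw [Finset.sum_eq_single j]
  · simp
  · intro b _ hb; simp [Pi.single_eq_of_ne hb]
  · simp

lemma trace_eigs : ∑ i, graphEigs G i = 0 := by
  have key : ∀ j : Fin n, ∑ i, graphEigs G i * (ev G i j * ev G i j)
      = ∑ t, (((G.adjMatrix ℝ) ^ 1) *ᵥ (Pi.single j 1)) t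
          * (((G.adjMatrix ℝ) ^ 0) *ᵥ (Pi.single j 1)) t := by
    intro j
    rw [quad G 1 0]
    refine (Finset.sum_congr rfl fun i _ => ?_).symm
    rw [coef_single]
    ring
  have lhs : ∀ j : Fin n, ∑ t, (((G.adjMatrix ℝ) ^ 1) *ᵥ (Pi.single j 1)) t
      * (((G.adjMatrix ℝ) ^ 0) *ᵥ (Pi.single j 1)) t = 0 := by
    intro j
    rw [pow_one, pow_zero, Matrix.one_mulVec]
    rw [Finset.sum_eq_single j]
    · simp
    · intro b _ hb; simp [Pi.single_eq_of_ne hb]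
    · simp
  calc ∑ i, graphEigs G i = ∑ i, graphEigs G i * ∑ j, ev G i j ^ 2 := by
        simp [ev_sq_sum]
    _ = ∑ j, ∑ i, graphEigs G i * (ev G i j * ev G i j) := by
        rw [Finset.sum_comm]
        refine Finset.sum_congr rfl fun i _ => ?_
        rw [Finset.mul_sum]
        exact Finset.sum_congr rfl fun j _ => by rw [pow_two]
    _ = ∑ j, (0:ℝ) := Finset.sum_congr rfl fun j _ => (key j).trans (lhs j)
    _ = 0 := by simp

lemma eig_sq_sum : ∑ i, graphEigs G i ^ 2 = ∑ j, ∑ t, ((G.adjMatrix ℝ) t j) ^ 2 := by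
  have key : ∀ j : Fin n, ∑ i, graphEigs G i ^ 2 * (ev G i j * ev G i j)
      = ∑ t, (((G.adjMatrix ℝ) ^ 1) *ᵥ (Pi.single j 1)) t
          * (((G.adjMatrix ℝ) ^ 1) *ᵥ (Pi.single j 1)) t := by
    intro j
    rw [quad G 1 1]
    refine (Finset.sum_congr rfl fun i _ => ?_).symm
    rw [coef_single]
  have lhs : ∀ j : Fin n, ∑ t, (((G.adjMatrix ℝ) ^ 1) *ᵥ (Pi.single j 1)) t
      * (((G.adjMatrix ℝ) ^ 1) *ᵥ (Pi.single j 1)) t = ∑ t, ((G.adjMatrix ℝ) t j) ^ 2 := by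
    intro j
    rw [pow_one]
    refine Finset.sum_congr rfl fun t _ => ?_
    rw [Matrix.mulVec_single]
    show (G.adjMatrix ℝ) t j * 1 * ((G.adjMatrix ℝ) t j * 1) = (G.adjMatrix ℝ) t j ^ 2
    ring
  calc ∑ i, graphEigs G i ^ 2 = ∑ i, graphEigs G i ^ 2 * ∑ j, ev G i j ^ 2 := by
        simp [ev_sq_sum]
    _ = ∑ j, ∑ i, graphEigs G i ^ 2 * (ev G i j * ev G i j) := by
        rw [Finset.sum_comm]
        refine Finset.sum_congr rfl fun i _ => ?_
        rw [Finset.mul_sum]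
        exact Finset.sum_congr rfl fun j _ => by ring
    _ = ∑ j, ∑ t, ((G.adjMatrix ℝ) t j) ^ 2 :=
        Finset.sum_congr rfl fun j _ => (key j).trans (lhs j)

lemma sumsq_dwalk (k : ℕ) :
    ∑ i, dwalk G k i ^ 2 = ∑ i, graphEigs G i ^ (2 * k) * coef G (fun _ => 1) i ^ 2 := by
  have h := quad G k k (fun _ => 1) (fun _ => 1)
  unfold dwalk
  calc ∑ i, (((G.adjMatrix ℝ) ^ k).mulVec (fun _ => 1) i) ^ 2
      = ∑ j, (((G.adjMatrix ℝ) ^ k) *ᵥ (fun _ => 1)) j * (((G.adjMatrix ℝ) ^ k) *ᵥ (fun _ => 1)) j := by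
        exact Finset.sum_congr rfl fun j _ => pow_two _
    _ = ∑ i, graphEigs G i ^ (k + k) * (coef G (fun _ => 1) i * coef G (fun _ => 1) i) := h
    _ = _ := by
        refine Finset.sum_congr rfl fun i _ => ?_
        rw [two_mul, pow_two]

lemma coef_one_sq : ∑ i, coef G (fun _ => 1) i ^ 2 = (n : ℝ) := by
  have h := (parseval G (fun _ => 1) (fun _ => 1)).symm
  calc ∑ i, coef G (fun _ => 1) i ^ 2
      = ∑ i, coef G (fun _ => 1) i * coef G (fun _ => 1) i :=
        Finset.sum_congr rfl fun i _ => pow_two _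
    _ = ∑ j : Fin n, (1:ℝ) * 1 := h
    _ = n := by simp

lemma exists_neighbor (hconn : G.Connected) (hn : 1 < n) (v : Fin n) : ∃ w, G.Adj v w := by
  have : ∃ u : Fin n, u ≠ v := by
    have : 1 < Fintype.card (Fin n) := by simpa using hn
    exact Fintype.exists_ne_of_one_lt_card this v
  rcases this with ⟨u, hu⟩
  rcases (hconn v u) with ⟨p⟩
  cases p with
  | nil => exact absurd rfl hu.symm
  | cons h _ => exact ⟨_, h⟩

lemma dwalk_pos (hconn : G.Connected) (hn : 1 < n) (k : ℕ) (i : Fin n) :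
    (1:ℝ) ≤ dwalk G k i := by
  induction k generalizing i with
  | zero => unfold dwalk; simp
  | succ k ih =>
      unfold dwalk
      rw [pow_succ', ← Matrix.mulVec_mulVec, SimpleGraph.adjMatrix_mulVec_apply]
      rcases exists_neighbor G hconn hn i with ⟨w, hw⟩
      have hmem : w ∈ G.neighborFinset i := by simpa using hw
      calc (1:ℝ) ≤ dwalk G k w := ih w
        _ ≤ ∑ u ∈ G.neighborFinset i, dwalk G k u := by
            refine Finset.single_le_sum (fun u _ => ?_) hmem
            exact le_trans zero_le_one (ih u)
        _ = _ := rfl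

end EstAux

namespace EstAux
open Matrix
variable {n : ℕ} (G : SimpleGraph (Fin n)) [DecidableRel G.Adj]

/-- sign vector from a 2-coloring -/
noncomputable def sgn (C : G.Coloring (Fin 2)) (v : Fin n) : ℝ := if C v = 0 then 1 else -1

lemma sgn_sq (C : G.Coloring (Fin 2)) (v : Fin n) : sgn G C v * sgn G C v = 1 := by
  unfold sgn; by_cases h : C v = 0 <;> simp [h]

lemma sgn_mul_adj (C : G.Coloring (Fin 2)) (j k : Fin n) :
    (G.adjMatrix ℝ) j k * (sgn G C j * sgn G C k) = -((G.adjMatrix ℝ) j k) := by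
  by_cases hadj : G.Adj j k
  · have hne := C.valid hadj
    have hj : C j = 0 ∨ C j = 1 := by omega
    have hk : C k = 0 ∨ C k = 1 := by omega
    unfold sgn
    rcases hj with hj | hj <;> rcases hk with hk | hk <;>
      simp [hj, hk, hadj] <;> exact absurd (hj.trans hk.symm) hne
  · simp [SimpleGraph.adjMatrix_apply, hadj]

lemma ray (y : Fin n → ℝ) :
    ∑ j, ((G.adjMatrix ℝ) *ᵥ y) j * y j = ∑ i, graphEigs G i * (coef G y i) ^ 2 := by
  have h := quad G 1 0 y y
  simp only [pow_one, pow_zero, Matrix.one_mulVec] at h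
  rw [h]
  refine Finset.sum_congr rfl fun i _ => ?_
  rw [pow_two]
  norm_num

lemma norm_split (y : Fin n → ℝ) : ∑ j, y j ^ 2 = ∑ i, coef G y i ^ 2 := by
  have h := parseval G y y
  calc ∑ j, y j ^ 2 = ∑ j, y j * y j := Finset.sum_congr rfl fun j _ => pow_two _
    _ = ∑ i, coef G y i * coef G y i := h
    _ = _ := Finset.sum_congr rfl fun i _ => (pow_two _).symm

lemma flip_norm (C : G.Coloring (Fin 2)) (i : Fin n) :
    ∑ j, (sgn G C j * ev G i j) ^ 2 = 1 := by
  rw [← ev_sq_sum G i]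
  refine Finset.sum_congr rfl fun j _ => ?_
  rw [mul_pow]
  have := sgn_sq G C j
  rw [pow_two, pow_two]
  nlinarith [this]

lemma flip_ray (C : G.Coloring (Fin 2)) (i : Fin n) :
    ∑ j, ((G.adjMatrix ℝ) *ᵥ (fun j => sgn G C j * ev G i j)) j * (sgn G C j * ev G i j)
      = - graphEigs G i := by
  have heig : ∀ j, ((G.adjMatrix ℝ) *ᵥ ev G i) j = graphEigs G i * ev G i j := by
    intro j
    have h3 : (G.adjMatrix ℝ) *ᵥ (ev G i) = graphEigs G i • (ev G i) :=
      (adjHerm G).mulVec_eigenvectorBasis i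
    rw [h3]; rfl
  have expand : ∀ j, ((G.adjMatrix ℝ) *ᵥ (fun j => sgn G C j * ev G i j)) j
      = ∑ k, (G.adjMatrix ℝ) j k * (sgn G C k * ev G i k) := by
    intro j; rfl
  calc ∑ j, ((G.adjMatrix ℝ) *ᵥ (fun j => sgn G C j * ev G i j)) j * (sgn G C j * ev G i j)
      = ∑ j, ∑ k, ((G.adjMatrix ℝ) j k * (sgn G C k * ev G i k)) * (sgn G C j * ev G i j) := by
        refine Finset.sum_congr rfl fun j _ => ?_
        rw [expand j, Finset.sum_mul]
    _ = ∑ j, ∑ k, -((G.adjMatrix ℝ) j k * ev G i k) * ev G i j := by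
        refine Finset.sum_congr rfl fun j _ => Finset.sum_congr rfl fun k _ => ?_
        have h := sgn_mul_adj G C j k
        calc ((G.adjMatrix ℝ) j k * (sgn G C k * ev G i k)) * (sgn G C j * ev G i j)
            = ((G.adjMatrix ℝ) j k * (sgn G C j * sgn G C k)) * (ev G i k * ev G i j) := by ring
          _ = (-((G.adjMatrix ℝ) j k)) * (ev G i k * ev G i j) := by rw [h]
          _ = -((G.adjMatrix ℝ) j k * ev G i k) * ev G i j := by ring
    _ = - ∑ j, ((G.adjMatrix ℝ) *ᵥ ev G i) j * ev G i j := by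
        rw [← Finset.sum_neg_distrib]
        refine Finset.sum_congr rfl fun j _ => ?_
        rw [show ((G.adjMatrix ℝ) *ᵥ ev G i) j = ∑ k, (G.adjMatrix ℝ) j k * ev G i k from rfl,
          Finset.sum_mul, ← Finset.sum_neg_distrib]
        exact Finset.sum_congr rfl fun k _ => by ring
    _ = - graphEigs G i := by
        rw [neg_inj.mpr]
        calc ∑ j, ((G.adjMatrix ℝ) *ᵥ ev G i) j * ev G i j
            = ∑ j, graphEigs G i * (ev G i j * ev G i j) := by
              refine Finset.sum_congr rfl fun j _ => ?_
              rw [heig j]; ring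
          _ = graphEigs G i * ∑ j, ev G i j ^ 2 := by
              rw [Finset.mul_sum]
              exact Finset.sum_congr rfl fun j _ => by rw [pow_two]
          _ = graphEigs G i := by rw [ev_sq_sum]; ring

end EstAux

namespace EstAux
open Matrix
variable {n : ℕ} (G : SimpleGraph (Fin n)) [DecidableRel G.Adj]

lemma fin2_flip : ∀ a b c : Fin 2, a ≠ b → (a = c ↔ ¬ b = c) := by decide

lemma walk_parity (C : G.Coloring (Fin 2)) {a b : Fin n} (p : G.Walk a b) :
    C a = C b ↔ Even p.length := by
  induction p with
  | nil => simp
  | cons h q ih =>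
      rw [SimpleGraph.Walk.length_cons, Nat.even_add_one, ← ih]
      exact fin2_flip _ _ _ (C.valid h)

lemma adj_of_colors_ne (hconn : G.Connected) (C : G.Coloring (Fin 2)) (r : ℝ)
    (hcube : (G.adjMatrix ℝ) ^ 3 = r • (G.adjMatrix ℝ)) :
    ∀ u v : Fin n, C u ≠ C v → G.Adj u v := by
  intro u v hCne
  have hne : u ≠ v := fun h => hCne (by rw [h])
  obtain ⟨p, hp⟩ := (hconn u v).exists_walk_length_eq_dist
  have hodd : ¬ Even p.length := fun he => hCne ((walk_parity G C p).mpr he)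
  cases p with
  | nil => exact absurd rfl hne
  | cons h q =>
    cases q with
    | nil => exact h
    | cons h2 q2 =>
      cases q2 with
      | nil => simp at hodd
      | @cons b c w h3 q3 =>
        have hposcard : 0 < Fintype.card {w : G.Walk u c | w.length = 3} :=
          Fintype.card_pos_iff.mpr ⟨⟨SimpleGraph.Walk.cons h (SimpleGraph.Walk.cons h2
              (SimpleGraph.Walk.cons h3 SimpleGraph.Walk.nil)), by simp⟩⟩
        have hpos : ((G.adjMatrix ℝ) ^ 3) u c ≠ 0 := by
          rw [SimpleGraph.adjMatrix_pow_apply_eq_card_walk]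
          exact_mod_cast Nat.cast_ne_zero.mpr hposcard.ne'
        have hadjuc : G.Adj u c := by
          by_contra hac
          rw [hcube] at hpos
          simp [SimpleGraph.adjMatrix_apply, hac] at hpos
        have hd := SimpleGraph.dist_le (SimpleGraph.Walk.cons hadjuc q3)
        simp only [SimpleGraph.Walk.length_cons] at hp hd
        omega

lemma iso_of_adj_iff (C : G.Coloring (Fin 2))
    (hadj : ∀ u v : Fin n, G.Adj u v ↔ C u ≠ C v) :
    ∃ p q : ℕ, p + q = n ∧
      Nonempty (G ≃g completeBipartiteGraph (Fin p) (Fin q)) := by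
  classical
  refine ⟨Fintype.card {v : Fin n // C v = 0}, Fintype.card {v : Fin n // ¬ C v = 0}, ?_, ?_⟩
  · have h := Fintype.card_congr (Equiv.sumCompl (fun v : Fin n => C v = 0))
    rw [Fintype.card_sum, Fintype.card_fin] at h
    exact h
  · set φ : Fin n ≃ Fin (Fintype.card {v : Fin n // C v = 0})
        ⊕ Fin (Fintype.card {v : Fin n // ¬ C v = 0}) :=
      ((Equiv.sumCompl (fun v : Fin n => C v = 0)).symm).trans
        (Equiv.sumCongr (Fintype.equivFinOfCardEq rfl) (Fintype.equivFinOfCardEq rfl))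
      with hphi
    have hleft : ∀ a : Fin n, (φ a).isLeft = true ↔ C a = 0 := by
      intro a
      by_cases h : C a = 0
      · simp [hphi, Equiv.sumCompl, h]
      · simp [hphi, Equiv.sumCompl, h]
    have hright : ∀ a : Fin n, (φ a).isRight = true ↔ ¬ C a = 0 := by
      intro a
      by_cases h : C a = 0
      · simp [hphi, Equiv.sumCompl, h]
      · simp [hphi, Equiv.sumCompl, h]
    refine ⟨⟨φ, ?_⟩⟩
    intro a b
    show (completeBipartiteGraph _ _).Adj (φ a) (φ b) ↔ G.Adj a b
    rw [hadj a b]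
    constructor
    · rintro (⟨h1, h2⟩ | ⟨h1, h2⟩)
      · have ha0 := (hleft a).mp h1
        have hb0 := (hright b).mp h2
        omega
      · have ha0 := (hright a).mp h1
        have hb0 := (hleft b).mp h2
        omega
    · intro hne
      by_cases ha : C a = 0
      · exact Or.inl ⟨(hleft a).mpr ha, (hright b).mpr (by omega)⟩
      · exact Or.inr ⟨(hright a).mpr ha, (hleft b).mpr (by omega)⟩

lemma mulVec_ev (i : Fin n) : (G.adjMatrix ℝ) *ᵥ ev G i = graphEigs G i • ev G i :=
  (adjHerm G).mulVec_eigenvectorBasis i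

lemma pow_mulVec_ev (k : ℕ) (i : Fin n) :
    ((G.adjMatrix ℝ) ^ k) *ᵥ ev G i = (graphEigs G i ^ k) • ev G i := by
  induction k with
  | zero => simp [Matrix.one_mulVec]
  | succ k ih =>
      rw [pow_succ', ← Matrix.mulVec_mulVec, ih, Matrix.mulVec_smul, mulVec_ev,
        smul_smul]
      rw [show graphEigs G i ^ k * graphEigs G i = graphEigs G i ^ (k+1) from by ring]

lemma ev_ne_zero (i : Fin n) : ∃ j, ev G i j ≠ 0 := by
  by_contra h
  push_neg at h
  have := ev_sq_sum G i
  simp [h] at this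

lemma eig_cube_of_cube (r : ℝ) (hc : (G.adjMatrix ℝ) ^ 3 = r • (G.adjMatrix ℝ)) (i : Fin n) :
    graphEigs G i ^ 3 = r * graphEigs G i := by
  have h1 := pow_mulVec_ev G 3 i
  rw [hc, Matrix.smul_mulVec, mulVec_ev] at h1
  obtain ⟨j, hj⟩ := ev_ne_zero G i
  have h2 := congrFun h1 j
  have h3 : r * (graphEigs G i * ev G i j) = graphEigs G i ^ 3 * ev G i j := h2
  have h4 : (r * graphEigs G i) * ev G i j = graphEigs G i ^ 3 * ev G i j := by
    rw [mul_assoc]; exact h3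
  exact (mul_right_cancel₀ hj h4).symm

lemma cube_eq_smul (r : ℝ) (h : ∀ i, graphEigs G i ^ 3 = r * graphEigs G i) :
    (G.adjMatrix ℝ) ^ 3 = r • (G.adjMatrix ℝ) := by
  have hA := adjHerm G
  set U : Matrix (Fin n) (Fin n) ℝ := (hA.eigenvectorUnitary : Matrix (Fin n) (Fin n) ℝ) with hU
  set D : Matrix (Fin n) (Fin n) ℝ :=
    Matrix.diagonal (RCLike.ofReal ∘ hA.eigenvalues) with hD
  have hsp : G.adjMatrix ℝ = U * D * star U := hA.spectral_theorem
  have hUU : star U * U = 1 := by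
    exact Unitary.coe_star_mul_self hA.eigenvectorUnitary
  have hcancel : ∀ X : Matrix (Fin n) (Fin n) ℝ, star U * (U * X) = X := by
    intro X; rw [← Matrix.mul_assoc, hUU, Matrix.one_mul]
  have hD3 : D * (D * D) = r • D := by
    rw [hD, Matrix.diagonal_mul_diagonal, Matrix.diagonal_mul_diagonal]
    rw [show r • Matrix.diagonal (RCLike.ofReal ∘ hA.eigenvalues)
        = Matrix.diagonal (r • (RCLike.ofReal ∘ hA.eigenvalues)) from
      (Matrix.diagonal_smul r _).symm]
    refine congrArg Matrix.diagonal (funext fun i => ?_)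
    have h2 : hA.eigenvalues i ^ 3 = r * hA.eigenvalues i := h i
    simp only [Pi.mul_apply, Pi.smul_apply, Function.comp_apply, smul_eq_mul,
      RCLike.ofReal_real_eq_id, id_eq]
    nlinarith [h2]
  calc (G.adjMatrix ℝ) ^ 3 = (U * D * star U) ^ 3 := by rw [← hsp]
    _ = U * D * star U * (U * D * star U) * (U * D * star U) := by
        rw [pow_succ, pow_succ, pow_one]
    _ = U * (D * (D * D)) * star U := by
        simp only [Matrix.mul_assoc, hcancel]
    _ = U * (r • D) * star U := by rw [hD3]
    _ = r • (U * D * star U) := by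
        rw [Matrix.mul_smul, Matrix.smul_mul, Matrix.mul_assoc]
    _ = r • (G.adjMatrix ℝ) := by rw [← hsp]

end EstAux

namespace EstAux
open Matrix Finset
variable {n : ℕ} (G : SimpleGraph (Fin n)) [DecidableRel G.Adj]

section Structure
variable (bb : Fin n → Bool)

/-- number of vertices in class `s` -/
def ccard (s : Bool) : ℕ := (Finset.univ.filter (fun v : Fin n => bb v = s)).card

lemma sum_classes (f : Bool → ℝ) :
    ∑ i, f (bb i) = (ccard bb true : ℝ) * f true + (ccard bb false : ℝ) * f false := by
  rw [← Finset.sum_filter_add_sum_filter_not Finset.univ (fun i => bb i = true)]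
  have e1 : ∀ i ∈ Finset.univ.filter (fun i : Fin n => bb i = true), f (bb i) = f true :=
    fun i hi => by rw [(Finset.mem_filter.mp hi).2]
  have h1 : ∑ i ∈ Finset.univ.filter (fun i : Fin n => bb i = true), f (bb i)
      = (ccard bb true : ℝ) * f true := by
    rw [Finset.sum_congr rfl e1, Finset.sum_const, nsmul_eq_mul]; rfl
  have hset : Finset.univ.filter (fun i : Fin n => ¬ bb i = true)
      = Finset.univ.filter (fun i => bb i = false) := by
    apply Finset.filter_congr; intro i _; simp
  have e2 : ∀ i ∈ Finset.univ.filter (fun i : Fin n => bb i = false), f (bb i) = f false :=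
    fun i hi => by rw [(Finset.mem_filter.mp hi).2]
  have h2 : ∑ i ∈ Finset.univ.filter (fun i : Fin n => ¬ bb i = true), f (bb i)
      = (ccard bb false : ℝ) * f false := by
    rw [hset, Finset.sum_congr rfl e2, Finset.sum_const, nsmul_eq_mul]; rfl
  rw [h1, h2]

lemma nbr_eq (hadj : ∀ u v : Fin n, G.Adj u v ↔ bb u ≠ bb v) : ∀ i : Fin n, G.neighborFinset i
    = Finset.univ.filter (fun j => bb j = ! bb i) := by
  intro i
  ext j
  simp only [SimpleGraph.mem_neighborFinset, Finset.mem_filter, Finset.mem_univ, true_and]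
  rw [hadj]
  constructor
  · intro h; cases hbi : bb i <;> cases hbj : bb j <;> simp_all
  · intro h; cases hbi : bb i <;> cases hbj : bb j <;> simp_all

lemma card_class_opp (i : Fin n) :
    (Finset.univ.filter (fun j => bb j = ! bb i)).card
      = if bb i then ccard bb false else ccard bb true := by
  cases h : bb i <;> simp [ccard]

/-- the walk-count recursion values -/
noncomputable def ff (p q : ℝ) : ℕ → Bool → ℝ
  | 0, _ => 1
  | (k+1), s => (if s then q else p) * ff p q k (!s)

lemma dwalk_eq_ff (hadj : ∀ u v : Fin n, G.Adj u v ↔ bb u ≠ bb v) (k : ℕ) (i : Fin n) :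
    dwalk G k i = ff (ccard bb true : ℝ) (ccard bb false : ℝ) k (bb i) := by
  induction k generalizing i with
  | zero => unfold dwalk ff; simp
  | succ k ih =>
      unfold dwalk
      rw [pow_succ', ← Matrix.mulVec_mulVec, SimpleGraph.adjMatrix_mulVec_apply,
        nbr_eq G bb hadj i]
      have hsum : ∑ j ∈ Finset.univ.filter (fun j => bb j = ! bb i),
          (((G.adjMatrix ℝ) ^ k) *ᵥ (fun _ => 1)) j
          = ∑ _j ∈ Finset.univ.filter (fun j => bb j = ! bb i),
            ff (ccard bb true : ℝ) (ccard bb false : ℝ) k (!bb i) := by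
        refine Finset.sum_congr rfl fun j hj => ?_
        have hbj := (Finset.mem_filter.mp hj).2
        have h := ih j
        unfold dwalk at h
        rw [h, hbj]
      rw [hsum, Finset.sum_const, nsmul_eq_mul, card_class_opp,
        show ff (↑(ccard bb true)) (↑(ccard bb false)) (k+1) (bb i)
          = (if bb i then (ccard bb false : ℝ) else (ccard bb true : ℝ))
            * ff (↑(ccard bb true)) (↑(ccard bb false)) k (!bb i) from rfl]
      rw [apply_ite (Nat.cast : ℕ → ℝ)]

lemma ff_pos (p q : ℝ) (hp : 1 ≤ p) (hq : 1 ≤ q) (k : ℕ) (s : Bool) : 0 < ff p q k s := by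
  induction k generalizing s with
  | zero => norm_num [ff]
  | succ k ih =>
      show 0 < (if s then q else p) * ff p q k (!s)
      have h1 : 0 < (if s then q else p) := by cases s <;> simp <;> linarith
      exact mul_pos h1 (ih (!s))

lemma sumsq_succ (hadj : ∀ u v : Fin n, G.Adj u v ↔ bb u ≠ bb v) (k : ℕ) :
    ∑ i, dwalk G (k+1) i ^ 2
      = ((ccard bb true : ℝ) * (ccard bb false : ℝ)) * ∑ i, dwalk G k i ^ 2 := by
  have hp : (ccard bb true : ℝ) = (ccard bb true : ℝ) := rfl
  have h1 : ∑ i, dwalk G k i ^ 2 = (ccard bb true : ℝ) * ff (ccard bb true : ℝ) (ccard bb false : ℝ) k true ^ 2 + (ccard bb false : ℝ) * ff (ccard bb true : ℝ) (ccard bb false : ℝ) k false ^ 2 := by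
    rw [show ∑ i, dwalk G k i ^ 2 = ∑ i, (fun s => ff (ccard bb true : ℝ) (ccard bb false : ℝ) k s ^ 2) (bb i) from
      Finset.sum_congr rfl fun i _ => by rw [dwalk_eq_ff G bb hadj]]
    exact sum_classes bb (fun s => ff (ccard bb true : ℝ) (ccard bb false : ℝ) k s ^ 2)
  have h2 : ∑ i, dwalk G (k+1) i ^ 2
      = (ccard bb true : ℝ) * ff (ccard bb true : ℝ) (ccard bb false : ℝ) (k+1) true ^ 2 + (ccard bb false : ℝ) * ff (ccard bb true : ℝ) (ccard bb false : ℝ) (k+1) false ^ 2 := by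
    rw [show ∑ i, dwalk G (k+1) i ^ 2 = ∑ i, (fun s => ff (ccard bb true : ℝ) (ccard bb false : ℝ) (k+1) s ^ 2) (bb i) from
      Finset.sum_congr rfl fun i _ => by rw [dwalk_eq_ff G bb hadj]]
    exact sum_classes bb (fun s => ff (ccard bb true : ℝ) (ccard bb false : ℝ) (k+1) s ^ 2)
  rw [h1, h2,
    show ff (ccard bb true : ℝ) (ccard bb false : ℝ) (k+1) true
      = (ccard bb false : ℝ) * ff (ccard bb true : ℝ) (ccard bb false : ℝ) k false from rfl,
    show ff (ccard bb true : ℝ) (ccard bb false : ℝ) (k+1) false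
      = (ccard bb true : ℝ) * ff (ccard bb true : ℝ) (ccard bb false : ℝ) k true from rfl]
  ring

lemma adj_sq (hadj : ∀ u v : Fin n, G.Adj u v ↔ bb u ≠ bb v) (u w : Fin n) :
    ((G.adjMatrix ℝ)^2) u w
      = if bb u = bb w then (if bb u then (ccard bb false : ℝ) else (ccard bb true : ℝ))
        else 0 := by
  rw [pow_two, Matrix.mul_apply]
  have hterm : ∀ x, (G.adjMatrix ℝ) u x * (G.adjMatrix ℝ) x w
      = if (bb x ≠ bb u ∧ bb x ≠ bb w) then (1:ℝ) else 0 := by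
    intro x
    simp only [SimpleGraph.adjMatrix_apply, hadj]
    by_cases h1 : bb x = bb u
    · rw [if_neg (by simp [h1]), if_neg (fun hc : bb x ≠ bb u ∧ bb x ≠ bb w => hc.1 h1)]
      ring
    · by_cases h2 : bb x = bb w
      · rw [if_neg (show ¬(bb x ≠ bb w) by simp [h2]),
          if_neg (fun hc : bb x ≠ bb u ∧ bb x ≠ bb w => hc.2 h2)]
        ring
      · rw [if_pos (fun h : bb u = bb x => h1 h.symm), if_pos h2, if_pos ⟨h1, h2⟩]
        norm_num
  rw [Finset.sum_congr rfl (fun x _ => hterm x), Finset.sum_boole]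
  by_cases huw : bb u = bb w
  · rw [if_pos huw]
    have hf : Finset.univ.filter (fun x => bb x ≠ bb u ∧ bb x ≠ bb w)
        = Finset.univ.filter (fun x => bb x = !bb u) := by
      apply Finset.filter_congr
      intro x _
      rw [← huw]
      cases hx : bb x <;> cases hu : bb u <;> simp
    rw [hf]
    rw [show (Finset.univ.filter (fun x => bb x = !bb u)).card
        = if bb u then ccard bb false else ccard bb true from card_class_opp bb u]
    cases h : bb u <;> simp
  · rw [if_neg huw]
    have hf : Finset.univ.filter (fun x => bb x ≠ bb u ∧ bb x ≠ bb w) = ∅ := by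
      rw [Finset.filter_eq_empty_iff]
      intro x _
      cases hx : bb x <;> cases hu : bb u <;> cases hw : bb w <;> simp_all
    rw [hf]
    simp

lemma adj_cube (hadj : ∀ u v : Fin n, G.Adj u v ↔ bb u ≠ bb v) :
    (G.adjMatrix ℝ)^3
      = (((ccard bb true : ℝ)) * ((ccard bb false : ℝ))) • G.adjMatrix ℝ := by
  ext u v
  rw [pow_succ, Matrix.mul_apply, Matrix.smul_apply]
  have hterm : ∀ x, ((G.adjMatrix ℝ)^2) u x * (G.adjMatrix ℝ) x v
      = if (bb x = bb u ∧ bb x ≠ bb v)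
          then (if bb u then (ccard bb false : ℝ) else (ccard bb true : ℝ)) else 0 := by
    intro x
    rw [adj_sq G bb hadj u x]
    simp only [SimpleGraph.adjMatrix_apply, hadj]
    by_cases h1 : bb x = bb u
    · by_cases h2 : bb x = bb v
      · rw [if_pos (show bb u = bb x from h1.symm), if_neg (show ¬(bb x ≠ bb v) by simp [h2]),
          if_neg (fun hc : bb x = bb u ∧ bb x ≠ bb v => hc.2 h2)]
        ring
      · rw [if_pos (show bb u = bb x from h1.symm), if_pos (show bb x ≠ bb v from h2),
          if_pos (show bb x = bb u ∧ bb x ≠ bb v from ⟨h1, h2⟩)]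
        ring
    · rw [if_neg (fun h : bb u = bb x => h1 h.symm),
        if_neg (fun hc : bb x = bb u ∧ bb x ≠ bb v => h1 hc.1)]
      ring
  rw [Finset.sum_congr rfl (fun x _ => hterm x)]
  by_cases huv : bb u = bb v
  · have hf : Finset.univ.filter (fun x => bb x = bb u ∧ bb x ≠ bb v) = ∅ := by
      rw [Finset.filter_eq_empty_iff]
      intro x _
      rw [huv]
      tauto
    have hnadj : ¬ G.Adj u v := by rw [hadj]; simpa using huv
    rw [Finset.sum_ite, hf]
    simp [SimpleGraph.adjMatrix_apply, hnadj]
  · have hf : Finset.univ.filter (fun x => bb x = bb u ∧ bb x ≠ bb v)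
        = Finset.univ.filter (fun x => bb x = bb u) := by
      apply Finset.filter_congr
      intro x _
      constructor
      · exact fun h => h.1
      · exact fun h => ⟨h, fun hc => huv (h ▸ hc ▸ rfl)⟩
    have hadjuv : G.Adj u v := by rw [hadj]; exact huv
    have hcard : (Finset.univ.filter (fun x => bb x = bb u)).card
        = if bb u then ccard bb true else ccard bb false := by
      cases h : bb u <;> simp [ccard]
    rw [Finset.sum_ite, hf, Finset.sum_const, Finset.sum_const_zero, add_zero,
      nsmul_eq_mul, hcard]
    simp only [SimpleGraph.adjMatrix_apply, if_pos hadjuv, mul_one]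
    cases h : bb u <;> simp [h] <;> ring

lemma entry_sq_sum (hadj : ∀ u v : Fin n, G.Adj u v ↔ bb u ≠ bb v) :
    ∑ j, ∑ t, ((G.adjMatrix ℝ) t j)^2
      = 2 * ((ccard bb true : ℝ) * (ccard bb false : ℝ)) := by
  have hin : ∀ j : Fin n, ∑ t, ((G.adjMatrix ℝ) t j)^2
      = (fun s => if s then (ccard bb false : ℝ) else (ccard bb true : ℝ)) (bb j) := by
    intro j
    have h1 : ∀ t, ((G.adjMatrix ℝ) t j)^2 = if G.Adj j t then (1:ℝ) else 0 := by
      intro t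
      rw [SimpleGraph.adjMatrix_apply]
      by_cases h : G.Adj t j
      · rw [if_pos h, if_pos h.symm]; norm_num
      · rw [if_neg h, if_neg (fun hc => h hc.symm)]; norm_num
    rw [Finset.sum_congr rfl (fun t _ => h1 t), Finset.sum_boole]
    have : Finset.univ.filter (fun t => G.Adj j t) = G.neighborFinset j := by
      ext t; simp [SimpleGraph.mem_neighborFinset]
    rw [this, nbr_eq G bb hadj j, card_class_opp]
    cases h : bb j <;> simp
  refine (Finset.sum_congr rfl (fun j _ => hin j)).trans
    (((sum_classes bb (fun s => if s then (ccard bb false : ℝ) else (ccard bb true : ℝ)))).trans ?_)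
  rw [show (if (true:Bool) = true then ((ccard bb false : ℝ)) else (ccard bb true : ℝ))
      = (ccard bb false : ℝ) from by simp,
    show (if (false:Bool) = true then ((ccard bb false : ℝ)) else (ccard bb true : ℝ))
      = (ccard bb true : ℝ) from by simp]
  ring

end Structure
end EstAux

namespace EstAux
open Matrix
variable {n : ℕ} (G : SimpleGraph (Fin n)) [DecidableRel G.Adj]

lemma exp_eig_sum (r : ℝ) (hr : 0 < r)
    (hcube : ∀ i, graphEigs G i ^ 3 = r ^ 2 * graphEigs G i)
    (hsum2 : ∑ i, graphEigs G i ^ 2 = 2 * r ^ 2) :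
    ∑ i, Real.exp (graphEigs G i)
      = Real.exp r + Real.exp (-r) + ((n : ℝ) - 2) := by
  set c1 := (Real.exp r - Real.exp (-r)) / (2 * r) with hc1
  set c2 := (Real.exp r + Real.exp (-r) - 2) / (2 * r ^ 2) with hc2
  have hterm : ∀ i, Real.exp (graphEigs G i)
      = 1 + graphEigs G i * c1 + graphEigs G i ^ 2 * c2 := by
    intro i
    have h0 : graphEigs G i * ((graphEigs G i - r) * (graphEigs G i + r)) = 0 := by
      linear_combination hcube i
    rcases mul_eq_zero.mp h0 with h | h
    · rw [h]; simp
    · rcases mul_eq_zero.mp h with h | h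
      · have he : graphEigs G i = r := by linarith
        rw [he, hc1, hc2]
        field_simp
        ring
      · have he : graphEigs G i = -r := by linarith
        rw [he, hc1, hc2]
        field_simp
        ring
  rw [Finset.sum_congr rfl (fun i _ => hterm i), Finset.sum_add_distrib,
    Finset.sum_add_distrib, ← Finset.sum_mul, ← Finset.sum_mul, trace_eigs, hsum2]
  rw [Finset.sum_const, Finset.card_univ, Fintype.card_fin, nsmul_eq_mul, mul_one]
  rw [hc2]
  field_simp
  ring

end EstAux

namespace EstAux
open Matrix
variable {n : ℕ} (G : SimpleGraph (Fin n)) [DecidableRel G.Adj]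

lemma sumsq_pos (hconn : G.Connected) (hn : 1 < n) (k : ℕ) :
    0 < ∑ i, dwalk G k i ^ 2 := by
  have hne : (Finset.univ : Finset (Fin n)).Nonempty :=
    ⟨⟨0, by omega⟩, Finset.mem_univ _⟩
  refine Finset.sum_pos (fun i _ => ?_) hne
  have := dwalk_pos G hconn hn k i
  nlinarith

lemma cbg_adj {α β : Type*} (x y : α ⊕ β) :
    (completeBipartiteGraph α β).Adj x y ↔ x.isLeft ≠ y.isLeft := by
  cases x <;> cases y <;> simp [completeBipartiteGraph]

lemma eq_of_iso (hn : 2 < n) (hconn : G.Connected)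
    {p q : ℕ} (e : G ≃g completeBipartiteGraph (Fin p) (Fin q)) (k : ℕ) :
    (∑ i, Real.exp (graphEigs G i))
      = 2 * Real.cosh (Real.sqrt
          ((∑ i, dwalk G (k+1) i ^ 2) / (∑ i, dwalk G k i ^ 2))) + ((n : ℝ) - 2) := by
  classical
  set bb : Fin n → Bool := fun v => (e v).isLeft with hbb
  have hadjb : ∀ u v : Fin n, G.Adj u v ↔ bb u ≠ bb v := by
    intro u v
    rw [← e.map_adj_iff, cbg_adj]
  have hn1 : 1 < n := by omega
  have hclass : ∀ s : Bool, 1 ≤ ccard bb s := by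
    intro s
    obtain ⟨w, hw⟩ := exists_neighbor G hconn hn1 ⟨0, by omega⟩
    have hne := (hadjb _ _).mp hw
    have : ∃ x, bb x = s := by
      by_cases h : bb ⟨0, by omega⟩ = s
      · exact ⟨_, h⟩
      · refine ⟨w, ?_⟩
        cases hs : s <;> cases h0 : bb (⟨0, by omega⟩ : Fin n) <;>
          cases hw2 : bb w <;> grind
    obtain ⟨x, hx⟩ := this
    have : x ∈ Finset.univ.filter (fun v : Fin n => bb v = s) :=
      Finset.mem_filter.mpr ⟨Finset.mem_univ _, hx⟩
    exact Finset.card_pos.mpr ⟨x, this⟩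
  have hpq1 : (1 : ℝ) ≤ (ccard bb true : ℝ) * (ccard bb false : ℝ) := by
    have h1 := hclass true
    have h2 := hclass false
    have : (1:ℝ) ≤ (ccard bb true : ℝ) := by exact_mod_cast h1
    have : (1:ℝ) ≤ (ccard bb false : ℝ) := by exact_mod_cast h2
    nlinarith
  set R := Real.sqrt ((ccard bb true : ℝ) * (ccard bb false : ℝ)) with hR
  have hR2 : R ^ 2 = (ccard bb true : ℝ) * (ccard bb false : ℝ) :=
    Real.sq_sqrt (by linarith)
  have hRpos : 0 < R := Real.sqrt_pos.mpr (by linarith)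
  have hcube := adj_cube G bb hadjb
  have heigcube : ∀ i, graphEigs G i ^ 3 = R ^ 2 * graphEigs G i := by
    intro i
    rw [hR2]
    exact eig_cube_of_cube G _ hcube i
  have hsum2 : ∑ i, graphEigs G i ^ 2 = 2 * R ^ 2 := by
    rw [hR2, eig_sq_sum G, entry_sq_sum G bb hadjb]
  have hEE := exp_eig_sum G R hRpos heigcube hsum2
  have hratio : (∑ i, dwalk G (k+1) i ^ 2) / (∑ i, dwalk G k i ^ 2)
      = (ccard bb true : ℝ) * (ccard bb false : ℝ) := by
    rw [sumsq_succ G bb hadjb k]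
    exact mul_div_cancel_right₀ _ (sumsq_pos G hconn hn1 k).ne'
  rw [hEE, hratio, ← hR, Real.cosh_eq]
  ring

end EstAux


open Matrix

/-- For a bipartite connected simple graph on `n > 2` vertices,
`EE(G) ≥ 2·cosh(γ^(k)) + n − 2` for every `k ≥ 0`, with equality iff `G` is
isomorphic to a complete bipartite graph `K_{p,q}` with `p + q = n`. -/
theorem estrada_ge_two_cosh_gammaSeq {n : ℕ} (hn : 2 < n)
    (G : SimpleGraph (Fin n)) [DecidableRel G.Adj] (hbip : G.Colorable 2)
    (hconn : G.Connected) :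
    ∀ k : ℕ,
      estradaIndex G ≥ 2 * Real.cosh (gammaSeq G k) + ((n : ℝ) - 2) ∧
      (estradaIndex G = 2 * Real.cosh (gammaSeq G k) + ((n : ℝ) - 2) ↔
        ∃ p q : ℕ, p + q = n ∧
          Nonempty (G ≃g completeBipartiteGraph (Fin p) (Fin q))) := by
  classical
  intro k
  obtain ⟨C⟩ := hbip
  have hn1 : 1 < n := by omega
  have huniv : (Finset.univ : Finset (Fin n)).Nonempty := ⟨⟨0, by omega⟩, Finset.mem_univ _⟩
  obtain ⟨i₀, -, hmax⟩ := Finset.exists_max_image Finset.univ (graphEigs G) huniv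
  obtain ⟨i₁, -, hmin⟩ := Finset.exists_min_image Finset.univ (graphEigs G) huniv
  have hmax' : ∀ i, graphEigs G i ≤ graphEigs G i₀ := fun i => hmax i (Finset.mem_univ _)
  have hmin' : ∀ i, graphEigs G i₁ ≤ graphEigs G i := fun i => hmin i (Finset.mem_univ _)
  set lam := graphEigs G i₀ with hlam
  -- Rayleigh bounds
  have hray_up : ∀ y : Fin n → ℝ,
      ∑ j, ((G.adjMatrix ℝ) *ᵥ y) j * y j ≤ lam * ∑ j, y j ^ 2 := by
    intro y
    rw [EstAux.ray G y, EstAux.norm_split G y, Finset.mul_sum]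
    exact Finset.sum_le_sum fun i _ => by nlinarith [sq_nonneg (EstAux.coef G y i), hmax' i]
  have hray_lo : ∀ y : Fin n → ℝ,
      graphEigs G i₁ * ∑ j, y j ^ 2 ≤ ∑ j, ((G.adjMatrix ℝ) *ᵥ y) j * y j := by
    intro y
    rw [EstAux.ray G y, EstAux.norm_split G y, Finset.mul_sum]
    exact Finset.sum_le_sum fun i _ => by nlinarith [sq_nonneg (EstAux.coef G y i), hmin' i]
  -- flipped eigenvectors
  have hflip : ∀ i, - graphEigs G i ≤ lam := by
    intro i
    have h1 := hray_up (fun j => EstAux.sgn G C j * EstAux.ev G i j)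
    rw [EstAux.flip_ray G C i, EstAux.flip_norm G C i] at h1
    linarith
  have h0lam : 0 ≤ lam := by linarith [hflip i₀]
  have hminlam : graphEigs G i₁ = - lam := by
    have h1 := hray_lo (fun j => EstAux.sgn G C j * EstAux.ev G i₀ j)
    rw [EstAux.flip_ray G C i₀, EstAux.flip_norm G C i₀] at h1
    have h2 := hflip i₁
    linarith
  have habs : ∀ i, graphEigs G i ^ 2 ≤ lam ^ 2 := fun i => by
    nlinarith [hmax' i, hflip i]
  -- sums of squares of walk-counts
  have hSpos := EstAux.sumsq_pos G hconn hn1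
  have hS0 : ∑ i, dwalk G 0 i ^ 2 = (n : ℝ) := by
    unfold dwalk
    simp [Matrix.one_mulVec]
  have hup : ∀ m, ∑ i, dwalk G (m+1) i ^ 2 ≤ lam ^ 2 * ∑ i, dwalk G m i ^ 2 := by
    intro m
    rw [EstAux.sumsq_dwalk G (m+1), EstAux.sumsq_dwalk G m, Finset.mul_sum]
    refine Finset.sum_le_sum fun i _ => ?_
    have hnn : 0 ≤ graphEigs G i ^ (2*m) * EstAux.coef G (fun _ => 1) i ^ 2 := by
      have h1 : (0:ℝ) ≤ graphEigs G i ^ (2*m) := by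
        rw [show 2*m = m*2 from by ring, pow_mul]
        positivity
      positivity
    calc graphEigs G i ^ (2*(m+1)) * EstAux.coef G (fun _ => 1) i ^ 2
        = graphEigs G i ^ 2 * (graphEigs G i ^ (2*m) * EstAux.coef G (fun _ => 1) i ^ 2) := by
          rw [show 2*(m+1) = 2 + 2*m from by ring, pow_add]; ring
      _ ≤ lam ^ 2 * (graphEigs G i ^ (2*m) * EstAux.coef G (fun _ => 1) i ^ 2) :=
          mul_le_mul_of_nonneg_right (habs i) hnn
  have hS1 : (n : ℝ) ≤ ∑ i, dwalk G 1 i ^ 2 := by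
    calc (n : ℝ) = ∑ _i : Fin n, (1:ℝ) := by simp
      _ ≤ ∑ i, dwalk G 1 i ^ 2 := Finset.sum_le_sum fun i _ => by
          nlinarith [EstAux.dwalk_pos G hconn hn1 1 i]
  have hlam1 : 1 ≤ lam := by
    have h1 := hup 0
    rw [hS0] at h1
    have hnpos : (0:ℝ) < n := by
      have : (0:ℕ) < n := by omega
      exact_mod_cast this
    have h3 : 1 * (n:ℝ) ≤ lam ^ 2 * n := by linarith
    have h2 : (1:ℝ) ≤ lam ^ 2 := le_of_mul_le_mul_right (by linarith) hnpos
    by_contra hcon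
    push_neg at hcon
    nlinarith [h2, h0lam]
  -- gamma bound
  have hγdef : gammaSeq G k
      = Real.sqrt ((∑ i, dwalk G (k + 1) i ^ 2) / (∑ i, dwalk G k i ^ 2)) := rfl
  have hγnonneg : 0 ≤ gammaSeq G k := by rw [hγdef]; exact Real.sqrt_nonneg _
  have hγle : gammaSeq G k ≤ lam := by
    rw [hγdef]
    have hdiv : (∑ i, dwalk G (k + 1) i ^ 2) / (∑ i, dwalk G k i ^ 2) ≤ lam ^ 2 :=
      (div_le_iff₀ (hSpos k)).mpr (by linarith [hup k])
    calc Real.sqrt ((∑ i, dwalk G (k + 1) i ^ 2) / (∑ i, dwalk G k i ^ 2))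
        ≤ Real.sqrt (lam ^ 2) := Real.sqrt_le_sqrt hdiv
      _ = lam := by rw [Real.sqrt_sq h0lam]
  have hcoshle : Real.cosh (gammaSeq G k) ≤ Real.cosh lam := by
    rw [Real.cosh_le_cosh, abs_of_nonneg hγnonneg, abs_of_nonneg h0lam]
    exact hγle
  -- splitting the sum
  have hne10 : i₁ ≠ i₀ := by
    intro h
    rw [h] at hminlam
    rw [← hlam] at hminlam
    linarith
  set s : Finset (Fin n) := (Finset.univ.erase i₀).erase i₁ with hs
  have hsplit : ∀ f : Fin n → ℝ, ∑ i, f i = f i₀ + f i₁ + ∑ i ∈ s, f i := by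
    intro f
    rw [← Finset.add_sum_erase _ f (Finset.mem_univ i₀),
      ← Finset.add_sum_erase _ f (Finset.mem_erase.mpr ⟨hne10, Finset.mem_univ _⟩)]
    ring
  have hcards : (s.card : ℝ) = (n : ℝ) - 2 := by
    rw [hs, Finset.card_erase_of_mem (Finset.mem_erase.mpr ⟨hne10, Finset.mem_univ _⟩),
      Finset.card_erase_of_mem (Finset.mem_univ i₀)]
    rw [Finset.card_univ, Fintype.card_fin]
    have : n - 1 - 1 = n - 2 := by omega
    rw [this, Nat.cast_sub (by omega)]
    norm_num
  have hrest0 : ∑ i ∈ s, graphEigs G i = 0 := by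
    have h1 := EstAux.trace_eigs G
    rw [hsplit (graphEigs G), hminlam] at h1
    rw [← hlam] at h1
    linarith
  have hrest_le : ∑ i ∈ s, (graphEigs G i + 1) ≤ ∑ i ∈ s, Real.exp (graphEigs G i) :=
    Finset.sum_le_sum fun i _ => Real.add_one_le_exp _
  have hrest_sum : ∑ i ∈ s, (graphEigs G i + 1) = (n : ℝ) - 2 := by
    rw [Finset.sum_add_distrib, hrest0, Finset.sum_const, nsmul_eq_mul, mul_one, hcards]
    ring
  have hEEdef : estradaIndex G = ∑ i, Real.exp (graphEigs G i) := rfl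
  have hEEsplit : estradaIndex G
      = Real.exp lam + Real.exp (-lam) + ∑ i ∈ s, Real.exp (graphEigs G i) := by
    rw [hEEdef, hsplit (fun i => Real.exp (graphEigs G i)), hminlam]
    try rw [← hlam]
  have hEElower : 2 * Real.cosh lam + ((n : ℝ) - 2) ≤ estradaIndex G := by
    rw [hEEsplit, Real.cosh_eq]
    linarith [hrest_le, hrest_sum]
  constructor
  · -- the inequality
    have := hcoshle
    linarith [hEElower]
  constructor
  · -- equality implies complete bipartite
    intro heq
    have hEEeq : estradaIndex G = 2 * Real.cosh lam + ((n : ℝ) - 2) := by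
      have h1 : 2 * Real.cosh (gammaSeq G k) + ((n : ℝ) - 2)
          ≤ 2 * Real.cosh lam + ((n : ℝ) - 2) := by linarith
      linarith [hEElower]
    have hsum_eq : ∑ i ∈ s, (graphEigs G i + 1) = ∑ i ∈ s, Real.exp (graphEigs G i) := by
      rw [hrest_sum]
      have := hEEsplit
      rw [hEEeq, Real.cosh_eq] at this
      linarith
    have hzero : ∀ i ∈ s, graphEigs G i = 0 := by
      by_contra hcon
      push_neg at hcon
      obtain ⟨i, hi, hne⟩ := hcon
      have hstrict : ∑ j ∈ s, (graphEigs G j + 1) < ∑ j ∈ s, Real.exp (graphEigs G j) :=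
        Finset.sum_lt_sum (fun j _ => Real.add_one_le_exp _)
          ⟨i, hi, Real.add_one_lt_exp hne⟩
      rw [hsum_eq] at hstrict
      exact lt_irrefl _ hstrict
    have hcube : ∀ i, graphEigs G i ^ 3 = lam ^ 2 * graphEigs G i := by
      intro i
      by_cases h0 : i = i₀
      · rw [h0, ← hlam]; ring
      · by_cases h1 : i = i₁
        · rw [h1, hminlam]; ring
        · have : i ∈ s := Finset.mem_erase.mpr ⟨h1, Finset.mem_erase.mpr ⟨h0, Finset.mem_univ _⟩⟩
          rw [hzero i this]; ring
    have hA3 := EstAux.cube_eq_smul G (lam ^ 2) hcube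
    have hadj : ∀ u v : Fin n, G.Adj u v ↔ C u ≠ C v := fun u v =>
      ⟨fun h => C.valid h, EstAux.adj_of_colors_ne G hconn C (lam ^ 2) hA3 u v⟩
    exact EstAux.iso_of_adj_iff G C hadj
  · -- complete bipartite implies equality
    rintro ⟨p, q, hpq, ⟨e⟩⟩
    have := EstAux.eq_of_iso G hn hconn e k
    rw [← hEEdef, ← hγdef] at this
    exact this
end

section
/- Let R be a real symmetric ℓ×ℓ matrix with eigenvalues ρ₁ ≥ ρ₂ ≥ … ≥ ρ_ℓ. Then EE(R) ≥ e^{ρ₁} + (ℓ − 1) + Tr(R) − ρ₁, with equality if and only if ρ₂ = ρ₃ = … = ρ_ℓ = 0. -/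
/-- The Euclidean norm of a vector in `ℝ^ℓ`. -/
noncomputable def eucNorm {l : ℕ} (v : Fin l → ℝ) : ℝ := Real.sqrt (∑ i, v i ^ 2)

/-- The sequence `ξ^(k) = ‖R^{k+1} f‖ / ‖R^k f‖`. -/
noncomputable def xiSeq {l : ℕ} (R : Matrix (Fin l) (Fin l) ℝ) (f : Fin l → ℝ) (k : ℕ) : ℝ :=
  eucNorm ((R ^ (k + 1)).mulVec f) / eucNorm ((R ^ k).mulVec f)

/-- A real symmetric matrix is Hermitian. -/
theorem Matrix.IsSymm.isHermitianReal {l : ℕ} {R : Matrix (Fin l) (Fin l) ℝ}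
    (hR : R.IsSymm) : R.IsHermitian := by
  rwa [Matrix.IsHermitian, Matrix.conjTranspose_eq_transpose_of_trivial]

lemma trace_eq_sum_eigs {l : ℕ} (R : Matrix (Fin l) (Fin l) ℝ) (hR : R.IsHermitian) :
    R.trace = ∑ i, hR.eigenvalues i := by
  nth_rewrite 1 [hR.spectral_theorem]
  rw [Unitary.conjStarAlgAut_apply, Matrix.trace_mul_cycle, ← Unitary.coe_star, ← MulMemClass.coe_mul,
    Unitary.star_mul_self, OneMemClass.coe_one, one_mul, Matrix.trace_diagonal]
  simp

/-- For a real symmetric `ℓ×ℓ` matrix `R` with eigenvalues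
`ρ₁ ≥ … ≥ ρ_ℓ`, one has `EE(R) ≥ e^{ρ₁} + (ℓ − 1) + Tr(R) − ρ₁`, with equality
iff `ρ₂ = … = ρ_ℓ = 0`. -/
theorem estradaMatrix_ge_exp_rho_one {l : ℕ} (hl : 0 < l)
    (R : Matrix (Fin l) (Fin l) ℝ) (hR : R.IsSymm)
    (rho : Fin l → ℝ) (hord : Antitone rho)
    (hperm : ∃ σ : Equiv.Perm (Fin l), rho = hR.isHermitianReal.eigenvalues ∘ σ) :
    (∑ i, Real.exp (rho i)) ≥
      Real.exp (rho ⟨0, hl⟩) + ((l : ℝ) - 1) + R.trace - rho ⟨0, hl⟩ ∧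
    ((∑ i, Real.exp (rho i)) =
      Real.exp (rho ⟨0, hl⟩) + ((l : ℝ) - 1) + R.trace - rho ⟨0, hl⟩ ↔
      ∀ i : Fin l, i ≠ ⟨0, hl⟩ → rho i = 0) := by
  obtain ⟨σ, hσ⟩ := hperm
  have htr : R.trace = ∑ i, rho i := by
    rw [trace_eq_sum_eigs R hR.isHermitianReal, hσ]
    exact (Equiv.sum_comp σ _).symm
  set z : Fin l := ⟨0, hl⟩
  set s : Finset (Fin l) := Finset.univ.erase z with hs
  have hcard : (s.card : ℝ) = (l : ℝ) - 1 := by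
    rw [hs, Finset.card_erase_of_mem (Finset.mem_univ z), Finset.card_univ,
      Fintype.card_fin]
    have : 1 ≤ l := hl
    push_cast [Nat.cast_sub this]
    ring
  have hsplit : (∑ i, Real.exp (rho i)) =
      Real.exp (rho z) + ∑ i ∈ s, Real.exp (rho i) :=
    (Finset.add_sum_erase _ _ (Finset.mem_univ z)).symm
  have hsplit2 : (∑ i, rho i) = rho z + ∑ i ∈ s, rho i :=
    (Finset.add_sum_erase _ _ (Finset.mem_univ z)).symm
  have hrhs : Real.exp (rho z) + ((l : ℝ) - 1) + R.trace - rho z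
      = Real.exp (rho z) + ∑ i ∈ s, (1 + rho i) := by
    rw [htr, hsplit2, Finset.sum_add_distrib, Finset.sum_const, nsmul_eq_mul,
      mul_one, hcard]
    ring
  have hterm : ∀ i ∈ s, 1 + rho i ≤ Real.exp (rho i) := fun i _ => by
    have := Real.add_one_le_exp (rho i); linarith
  constructor
  · rw [hsplit, hrhs]
    have := Finset.sum_le_sum hterm
    linarith
  · rw [hsplit, hrhs]
    constructor
    · intro h i hi
      by_contra hne
      have hlt : 1 + rho i < Real.exp (rho i) := by
        have := Real.add_one_lt_exp hne; linarith
      have hmem : i ∈ s := Finset.mem_erase.mpr ⟨hi, Finset.mem_univ i⟩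
      have : ∑ j ∈ s, (1 + rho j) < ∑ j ∈ s, Real.exp (rho j) :=
        Finset.sum_lt_sum hterm ⟨i, hmem, hlt⟩
      linarith
    · intro h
      have : ∀ i ∈ s, Real.exp (rho i) = 1 + rho i := by
        intro i hi
        rw [h i (Finset.mem_erase.mp hi).1]
        simp
      rw [Finset.sum_congr rfl this]
end

section
/- Let R be an entrywise nonnegative real symmetric ℓ×ℓ matrix with eigenvalues ρ₁ ≥ … ≥ ρ_ℓ, let e be the all-ones vector, and suppose R^j e ≠ 0 for all 0 ≤ j ≤ k, so that ξ^(k) = ‖R^{k+1} e‖ / ‖R^k e‖ is defined. Then EE(R) ≥ e^{ξ^(k)} + (ℓ − 1) + Tr(R) − ξ^(k). -/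
open Matrix

lemma inner_euc {l : ℕ} (x y : EuclideanSpace ℝ (Fin l)) : (inner ℝ x y : ℝ) = ∑ i, x i * y i := by
  simp [PiLp.inner_apply, RCLike.inner_apply, conj_trivial, mul_comm]

lemma repr_mulVec_s18 {l : ℕ} (R : Matrix (Fin l) (Fin l) ℝ) (hR : R.IsSymm) (hH : R.IsHermitian)
    (w : EuclideanSpace ℝ (Fin l)) (i : Fin l) :
    hH.eigenvectorBasis.repr (WithLp.toLp 2 (R *ᵥ w)) i
      = hH.eigenvalues i * hH.eigenvectorBasis.repr w i := by
  rw [OrthonormalBasis.repr_apply_apply, OrthonormalBasis.repr_apply_apply,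
    inner_euc, inner_euc]
  have h1 : ∑ j, (hH.eigenvectorBasis i) j * (R *ᵥ w) j
      = (⇑(hH.eigenvectorBasis i)) ⬝ᵥ (R *ᵥ w) := rfl
  rw [h1, dotProduct_mulVec, ← mulVec_transpose, show Rᵀ = R from hR,
    hH.mulVec_eigenvectorBasis, smul_dotProduct]
  simp [dotProduct, mul_assoc]

lemma norm_sq_euc {l : ℕ} (x : EuclideanSpace ℝ (Fin l)) : ‖x‖ ^ 2 = ∑ i, x i ^ 2 := by
  rw [EuclideanSpace.norm_eq, Real.sq_sqrt (by positivity)]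
  simp [sq_abs]

lemma repr_parseval {l : ℕ} (R : Matrix (Fin l) (Fin l) ℝ) (hH : R.IsHermitian)
    (w : EuclideanSpace ℝ (Fin l)) :
    ∑ i, (hH.eigenvectorBasis.repr w i) ^ 2 = ‖w‖ ^ 2 := by
  rw [← norm_sq_euc (hH.eigenvectorBasis.repr w), hH.eigenvectorBasis.repr.norm_map]

lemma inner_mulVec_eq {l : ℕ} (R : Matrix (Fin l) (Fin l) ℝ) (hR : R.IsSymm)
    (hH : R.IsHermitian) (w : EuclideanSpace ℝ (Fin l)) :
    (inner ℝ w (WithLp.toLp 2 (R *ᵥ w)) : ℝ)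
      = ∑ i, hH.eigenvalues i * (hH.eigenvectorBasis.repr w i) ^ 2 := by
  rw [← LinearIsometryEquiv.inner_map_map hH.eigenvectorBasis.repr, inner_euc]
  refine Finset.sum_congr rfl fun i _ => ?_
  rw [repr_mulVec_s18 R hR hH]
  ring

lemma rayleigh_le_s18 {l : ℕ} (R : Matrix (Fin l) (Fin l) ℝ) (hR : R.IsSymm)
    (hH : R.IsHermitian) (i₀ : Fin l) (hmax : ∀ i, hH.eigenvalues i ≤ hH.eigenvalues i₀)
    (w : EuclideanSpace ℝ (Fin l)) :
    (inner ℝ w (WithLp.toLp 2 (R *ᵥ w)) : ℝ)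
      ≤ hH.eigenvalues i₀ * ‖w‖ ^ 2 := by
  rw [inner_mulVec_eq R hR hH, ← repr_parseval R hH w, Finset.mul_sum]
  exact Finset.sum_le_sum fun i _ =>
    mul_le_mul_of_nonneg_right (hmax i) (sq_nonneg _)

lemma abs_eig_le_s18 {l : ℕ} (R : Matrix (Fin l) (Fin l) ℝ) (hR : R.IsSymm)
    (hnn : ∀ i j, 0 ≤ R i j) (hH : R.IsHermitian) (i₀ : Fin l)
    (hmax : ∀ i, hH.eigenvalues i ≤ hH.eigenvalues i₀) (i : Fin l) :
    |hH.eigenvalues i| ≤ hH.eigenvalues i₀ := by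
  set u : EuclideanSpace ℝ (Fin l) := hH.eigenvectorBasis i with hu
  set u' : EuclideanSpace ℝ (Fin l) := WithLp.toLp 2 (fun j => |u j|) with hu'
  have hnu : ‖u‖ = 1 := hH.eigenvectorBasis.orthonormal.1 i
  have hnu' : ‖u'‖ ^ 2 = 1 := by
    rw [norm_sq_euc]
    simp only [hu', sq_abs]
    rw [← norm_sq_euc, hnu, one_pow]
  have heig : (inner ℝ u (WithLp.toLp 2 (R *ᵥ u)) : ℝ) = hH.eigenvalues i := by
    rw [inner_mulVec_eq R hR hH, hu, hH.eigenvectorBasis.repr_self]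
    rw [Finset.sum_eq_single i]
    · simp [EuclideanSpace.single_apply]
    · intro j _ hj
      simp [EuclideanSpace.single_apply, hj]
    · simp
  have hle : |(inner ℝ u (WithLp.toLp 2 (R *ᵥ u)) : ℝ)|
      ≤ (inner ℝ u' (WithLp.toLp 2 (R *ᵥ u')) : ℝ) := by
    rw [inner_euc, inner_euc]
    calc |∑ j, u j * (R *ᵥ ⇑u) j| ≤ ∑ j, |u j * (R *ᵥ ⇑u) j| := Finset.abs_sum_le_sum_abs _ _
      _ ≤ ∑ j, u' j * (R *ᵥ ⇑u') j := by
          refine Finset.sum_le_sum fun j _ => ?_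
          rw [abs_mul]
          refine mul_le_mul_of_nonneg_left ?_ (abs_nonneg _)
          calc |(R *ᵥ ⇑u) j| = |∑ m, R j m * u m| := rfl
            _ ≤ ∑ m, |R j m * u m| := Finset.abs_sum_le_sum_abs _ _
            _ = ∑ m, R j m * u' m := by
                refine Finset.sum_congr rfl fun m _ => ?_
                rw [abs_mul, abs_of_nonneg (hnn j m)]
            _ = (R *ᵥ ⇑u') j := rfl
  calc |hH.eigenvalues i| ≤ (inner ℝ u' (WithLp.toLp 2 (R *ᵥ u')) : ℝ) := by
        rw [← heig]; exact hle
    _ ≤ hH.eigenvalues i₀ * ‖u'‖ ^ 2 := rayleigh_le_s18 R hR hH i₀ hmax u'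
    _ = hH.eigenvalues i₀ := by rw [hnu']; ring

lemma norm_mulVec_le {l : ℕ} (R : Matrix (Fin l) (Fin l) ℝ) (hR : R.IsSymm)
    (hH : R.IsHermitian) (i₀ : Fin l) (h0 : 0 ≤ hH.eigenvalues i₀)
    (habs : ∀ i, |hH.eigenvalues i| ≤ hH.eigenvalues i₀)
    (w : EuclideanSpace ℝ (Fin l)) :
    ‖(WithLp.toLp 2 (R *ᵥ w))‖ ≤ hH.eigenvalues i₀ * ‖w‖ := by
  have hsq : ‖(WithLp.toLp 2 (R *ᵥ w))‖ ^ 2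
      ≤ (hH.eigenvalues i₀ * ‖w‖) ^ 2 := by
    rw [← repr_parseval R hH, mul_pow, ← repr_parseval R hH w, Finset.mul_sum]
    refine Finset.sum_le_sum fun i _ => ?_
    rw [repr_mulVec_s18 R hR hH, mul_pow, ← sq_abs (hH.eigenvalues i)]
    exact mul_le_mul_of_nonneg_right
      (pow_le_pow_left₀ (abs_nonneg _) (habs i) 2) (sq_nonneg _)
  calc ‖(WithLp.toLp 2 (R *ᵥ w))‖
      = Real.sqrt (‖(WithLp.toLp 2 (R *ᵥ w))‖ ^ 2) :=
        (Real.sqrt_sq (norm_nonneg _)).symm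
    _ ≤ Real.sqrt ((hH.eigenvalues i₀ * ‖w‖) ^ 2) := Real.sqrt_le_sqrt hsq
    _ = hH.eigenvalues i₀ * ‖w‖ := Real.sqrt_sq (by positivity)


lemma trace_eq_sum_eig {l : ℕ} (R : Matrix (Fin l) (Fin l) ℝ) (hH : R.IsHermitian) :
    R.trace = ∑ i, hH.eigenvalues i := by
  classical
  rw [hH.trace_eq_sum_eigenvalues]
  simp

lemma exp_sub_mono {a b : ℝ} (ha : 0 ≤ a) (hab : a ≤ b) :
    Real.exp a - a ≤ Real.exp b - b := by
  have h1 := Real.add_one_le_exp (b - a)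
  have h2 := Real.one_le_exp ha
  have h3 : Real.exp b = Real.exp a * Real.exp (b - a) := by
    rw [← Real.exp_add]; ring_nf
  nlinarith [Real.exp_pos a]

lemma eucNorm_eq {l : ℕ} (v : Fin l → ℝ) :
    eucNorm v = ‖(WithLp.toLp 2 v : EuclideanSpace ℝ (Fin l))‖ := by
  rw [eucNorm, EuclideanSpace.norm_eq]; simp [sq_abs]

/-- For an entrywise nonnegative real symmetric `ℓ×ℓ` matrix `R`
and the all-ones vector `e`, if `R^j e ≠ 0` for `0 ≤ j ≤ k`, then
`EE(R) ≥ e^{ξ^(k)} + (ℓ − 1) + Tr(R) − ξ^(k)`. -/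
theorem estradaMatrix_ge_exp_xiSeq {l : ℕ} (R : Matrix (Fin l) (Fin l) ℝ)
    (hR : R.IsSymm) (hnn : ∀ i j, 0 ≤ R i j)
    (k : ℕ) (he : ∀ j : ℕ, j ≤ k → (R ^ j).mulVec (fun _ => 1) ≠ 0) :
    (∑ i, Real.exp (hR.isHermitianReal.eigenvalues i)) ≥
      Real.exp (xiSeq R (fun _ => 1) k) + ((l : ℝ) - 1) + R.trace -
        xiSeq R (fun _ => 1) k := by
  classical
  set hH := hR.isHermitianReal with hHdef
  set ρ := hH.eigenvalues with hρ
  rcases Nat.eq_zero_or_pos l with hl | hl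
  · exfalso
    apply he 0 (Nat.zero_le k)
    subst hl
    funext i
    exact Fin.elim0 i
  haveI : Nonempty (Fin l) := Fin.pos_iff_nonempty.mp hl
  obtain ⟨i₀, hmax⟩ := Finite.exists_max ρ
  have htr : R.trace = ∑ i, ρ i := trace_eq_sum_eig R hH
  have htrnn : (0:ℝ) ≤ R.trace := Finset.sum_nonneg fun i _ => hnn i i
  have h0 : 0 ≤ ρ i₀ := by
    by_contra h
    push_neg at h
    have h1 : ∑ i, ρ i ≤ (l : ℝ) * ρ i₀ := by
      calc ∑ i, ρ i ≤ ∑ _i : Fin l, ρ i₀ := Finset.sum_le_sum fun i _ => hmax i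
        _ = (l : ℝ) * ρ i₀ := by simp [mul_comm]
    have hl' : (1:ℝ) ≤ l := by exact_mod_cast hl
    nlinarith
  have habs : ∀ i, |ρ i| ≤ ρ i₀ := abs_eig_le_s18 R hR hnn hH i₀ hmax
  set ξ := xiSeq R (fun _ => 1) k with hξ
  have hξnn : 0 ≤ ξ := div_nonneg (Real.sqrt_nonneg _) (Real.sqrt_nonneg _)
  have hξle : ξ ≤ ρ i₀ := by
    set v : EuclideanSpace ℝ (Fin l) := WithLp.toLp 2 ((R ^ k) *ᵥ (fun _ => 1)) with hv
    have hvne : v ≠ 0 := fun h => he k le_rfl (by simpa [hv] using congrArg WithLp.ofLp h)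
    have hvpos : 0 < ‖v‖ := norm_pos_iff.mpr hvne
    have hstep : (R ^ (k+1)) *ᵥ (fun _ => (1:ℝ)) = R *ᵥ ⇑v := by
      rw [pow_succ', ← mulVec_mulVec]
    rw [hξ, xiSeq, hstep, eucNorm_eq, eucNorm_eq, div_le_iff₀ hvpos]
    exact norm_mulVec_le R hR hH i₀ h0 habs v
  have hsplit : ∑ i, Real.exp (ρ i)
      = Real.exp (ρ i₀) + ∑ i ∈ Finset.univ.erase i₀, Real.exp (ρ i) :=
    (Finset.add_sum_erase _ _ (Finset.mem_univ i₀)).symm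
  have hrest : ∑ i ∈ Finset.univ.erase i₀, (1 + ρ i)
      ≤ ∑ i ∈ Finset.univ.erase i₀, Real.exp (ρ i) :=
    Finset.sum_le_sum fun i _ => by linarith [Real.add_one_le_exp (ρ i)]
  have hcard : ((Finset.univ.erase i₀).card : ℝ) = (l : ℝ) - 1 := by
    rw [Finset.card_erase_of_mem (Finset.mem_univ i₀)]
    simp [Nat.cast_sub hl]
  have hsum1 : ∑ i ∈ Finset.univ.erase i₀, (1 + ρ i)
      = ((l:ℝ) - 1) + (R.trace - ρ i₀) := by
    rw [Finset.sum_add_distrib, Finset.sum_const, nsmul_eq_mul, hcard,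
      Finset.sum_erase_eq_sub (Finset.mem_univ i₀), htr]
    ring
  have hmono : Real.exp ξ - ξ ≤ Real.exp (ρ i₀) - ρ i₀ := exp_sub_mono hξnn hξle
  calc Real.exp ξ + ((l : ℝ) - 1) + R.trace - ξ
      ≤ Real.exp (ρ i₀) + (((l:ℝ) - 1) + (R.trace - ρ i₀)) := by linarith
    _ ≤ Real.exp (ρ i₀) + ∑ i ∈ Finset.univ.erase i₀, Real.exp (ρ i) := by
        rw [← hsum1]; linarith
    _ = ∑ i, Real.exp (ρ i) := hsplit.symm
end
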